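/- arXiv:1909.02943 — 3 statements merged into one kernel-verified Lean document; each statement's English description precedes it below -/
import Mathlib

section
/- The series ∑_{n=1}^∞ (1/4^n) * C(2n,n) / n equals 2·ln(2). -/
open Real Finset

/-- Real zeta value ζ(k) = ∑_{n≥1} 1/n^k. -/
noncomputable def zval (k : ℕ) : ℝ := ∑' n : ℕ, 1 / ((n : ℝ) + 1) ^ k

/-- Li₄(1/2) = ∑_{k≥1} (1/2)^k / k^4. -/
noncomputable def Li4half : ℝ := ∑' n : ℕ, (1 / 2 : ℝ) ^ (n + 1) / ((n : ℝ) + 1) ^ 4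

/-- Harmonic number H_n = ∑_{k=1}^n 1/k. -/
noncomputable def H (n : ℕ) : ℝ := ∑ k ∈ Finset.range n, 1 / ((k : ℝ) + 1)

/-- Generalized harmonic number H_n^{(2)} = ∑_{k=1}^n 1/k². -/
noncomputable def H2 (n : ℕ) : ℝ := ∑ k ∈ Finset.range n, 1 / ((k : ℝ) + 1) ^ 2

/-- Odd harmonic number O_n = ∑_{k=1}^n 1/(2k-1). -/
noncomputable def Oh (n : ℕ) : ℝ := ∑ k ∈ Finset.range n, 1 / (2 * (k : ℝ) + 1)


noncomputable def cb (n : ℕ) : ℝ := (Nat.choose (2*n) n : ℝ) / 4 ^ n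

lemma cb_nonneg (n : ℕ) : 0 ≤ cb n := by unfold cb; positivity

lemma cb_zero : cb 0 = 1 := by simp [cb]

lemma cb_one : cb 1 = 1/2 := by norm_num [cb]

lemma cb_rec (n : ℕ) : (2*(n:ℝ)+2) * cb (n+1) = (2*(n:ℝ)+1) * cb n := by
  have h : (n+1) * Nat.choose (2*(n+1)) (n+1) = 2*(2*n+1) * Nat.choose (2*n) n := by
    simpa [Nat.centralBinom] using Nat.succ_mul_centralBinom_succ n
  have h' : ((n:ℝ)+1) * (Nat.choose (2*(n+1)) (n+1) : ℝ)
      = 2*(2*(n:ℝ)+1) * (Nat.choose (2*n) n : ℝ) := by exact_mod_cast h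
  have h4 : (4:ℝ)^n ≠ 0 := by positivity
  unfold cb
  rw [pow_succ]
  rw [mul_div_assoc', mul_div_assoc', div_eq_div_iff (by positivity) h4]
  linear_combination (2*(4:ℝ)^n) * h'

lemma cb_sq_le (n : ℕ) : cb n ^ 2 * (2*(n:ℝ)+1) ≤ 1 := by
  induction n with
  | zero => simp [cb_zero]
  | succ n ih =>
    have hrec := cb_rec n
    have h2 : (2*(n:ℝ)+2)^2 * cb (n+1)^2 = (2*(n:ℝ)+1)^2 * cb n^2 := by
      rw [← mul_pow, hrec, mul_pow]
    have key : (2*(n:ℝ)+2)^2 * (cb (n+1)^2 * (2*(n:ℝ)+3)) ≤ (2*(n:ℝ)+2)^2 * 1 := by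
      have e1 : (2*(n:ℝ)+2)^2 * (cb (n+1)^2 * (2*(n:ℝ)+3))
          = ((2*(n:ℝ)+1)*(2*(n:ℝ)+3)) * (cb n^2*(2*(n:ℝ)+1)) := by
        linear_combination (2*(n:ℝ)+3) * h2
      rw [e1]
      calc ((2*(n:ℝ)+1)*(2*(n:ℝ)+3)) * (cb n^2*(2*(n:ℝ)+1))
          ≤ ((2*(n:ℝ)+1)*(2*(n:ℝ)+3)) * 1 := by
            apply mul_le_mul_of_nonneg_left ih (by positivity)
        _ ≤ (2*(n:ℝ)+2)^2 * 1 := by nlinarith [Nat.cast_nonneg (α := ℝ) n]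
    have := le_of_mul_le_mul_left key (by positivity)
    push_cast
    linarith

lemma cb_le_one (n : ℕ) : cb n ≤ 1 := by
  nlinarith [cb_sq_le n, cb_nonneg n, sq_nonneg (cb n - 1),
    mul_nonneg (Nat.cast_nonneg (α := ℝ) n) (sq_nonneg (cb n))]

lemma summable_geom_shift {t : ℝ} (h0 : 0 ≤ t) (h1 : t < 1) :
    Summable (fun n : ℕ => t ^ (n-1)) := by
  apply (summable_nat_add_iff 1).mp
  simpa using summable_geometric_of_lt_one h0 h1

lemma summable_mul_geom_shift {t : ℝ} (h0 : 0 ≤ t) (h1 : t < 1) :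
    Summable (fun n : ℕ => (n:ℝ) * t ^ (n-1)) := by
  apply (summable_nat_add_iff 1).mp
  have h := (summable_pow_mul_geometric_of_norm_lt_one 1
      (r := t) (by rwa [Real.norm_eq_abs, abs_of_nonneg h0])).add
    (summable_geometric_of_lt_one h0 h1)
  apply h.congr
  intro n
  push_cast [Nat.add_sub_cancel]
  ring

lemma smaster {y : ℝ} (hy : |y| < 1) {b : ℕ → ℝ} {C : ℝ}
    (hb : ∀ n, |b n| ≤ C * (((n:ℝ)+1) * |y| ^ n)) : Summable b := by
  have h0 : 0 ≤ |y| := abs_nonneg y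
  have h := (((summable_pow_mul_geometric_of_norm_lt_one 1
      (r := |y|) (by rwa [Real.norm_eq_abs, abs_abs])).add
    (summable_geometric_of_lt_one h0 hy)).mul_left C)
  refine Summable.of_norm_bounded (g := fun n => C * (((n:ℝ)+1) * |y| ^ n))
    (h.congr fun n => by push_cast; ring) (fun n => by rw [Real.norm_eq_abs]; exact hb n)
lemma g_bound {n : ℕ} {z t : ℝ} (hz : |z| ≤ t) :
    ‖cb n * ((n:ℝ) * z^(n-1))‖ ≤ (n:ℝ) * t^(n-1) := by
  have ht : 0 ≤ t := le_trans (abs_nonneg z) hz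
  have h1 : ‖cb n * ((n:ℝ) * z^(n-1))‖ = cb n * ((n:ℝ) * |z|^(n-1)) := by
    rw [Real.norm_eq_abs, abs_mul, abs_mul, abs_of_nonneg (cb_nonneg n), abs_pow, Nat.abs_cast]
  rw [h1]
  calc cb n * ((n:ℝ) * |z|^(n-1)) ≤ 1 * ((n:ℝ) * t^(n-1)) := by
        apply mul_le_mul (cb_le_one n) ?_ (by positivity) (by norm_num)
        exact mul_le_mul_of_nonneg_left (pow_le_pow_left₀ (abs_nonneg z) hz _) (Nat.cast_nonneg n)
    _ = (n:ℝ) * t^(n-1) := one_mul _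

lemma f_bound {n : ℕ} {z t : ℝ} (hz : |z| ≤ t) :
    ‖cb n / (n:ℝ) * ((n:ℝ) * z^(n-1))‖ ≤ t^(n-1) := by
  have ht : 0 ≤ t := le_trans (abs_nonneg z) hz
  cases n with
  | zero => simp
  | succ m =>
    have hm : ((m:ℝ)+1) ≠ 0 := by positivity
    have h1 : cb (m+1) / ((m+1:ℕ):ℝ) * (((m+1:ℕ):ℝ) * z^((m+1)-1)) = cb (m+1) * z^m := by
      push_cast [Nat.add_sub_cancel]
      field_simp
    rw [h1, Real.norm_eq_abs, abs_mul, abs_of_nonneg (cb_nonneg _), abs_pow,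
      Nat.add_sub_cancel]
    calc cb (m+1) * |z|^m ≤ 1 * t^m := by
          apply mul_le_mul (cb_le_one _) (pow_le_pow_left₀ (abs_nonneg z) hz _)
            (by positivity) (by norm_num)
      _ = t^m := one_mul _

lemma summable_cb_pow {y : ℝ} (hy : |y| < 1) :
    Summable (fun n : ℕ => cb n * y ^ n) := by
  apply smaster hy (C := 1)
  intro n
  rw [abs_mul, abs_of_nonneg (cb_nonneg n), abs_pow, one_mul]
  apply mul_le_mul ?_ (le_refl _) (by positivity) (by positivity)
  exact le_trans (cb_le_one n) (by linarith [Nat.cast_nonneg (α := ℝ) n])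

lemma hasDerivAt_G {r y : ℝ} (hr1 : r < 1) (hy : y ∈ Set.Ioo (-r) r) :
    HasDerivAt (fun z : ℝ => ∑' n : ℕ, cb n * z ^ n)
      (∑' n : ℕ, cb n * ((n:ℝ) * y ^ (n-1))) y := by
  have hr0 : 0 < r := by
    rcases hy with ⟨h1, h2⟩; linarith
  refine hasDerivAt_tsum_of_isPreconnected
    (u := fun (n : ℕ) => (n:ℝ) * r^(n-1)) (g := fun (n : ℕ) (z : ℝ) => cb n * z ^ n)
    (g' := fun (n : ℕ) (z : ℝ) => cb n * ((n:ℝ) * z ^ (n-1)))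
    (summable_mul_geom_shift hr0.le hr1) isOpen_Ioo (convex_Ioo _ _).isPreconnected
    (fun n z _ => (hasDerivAt_pow n z).const_mul (cb n))
    (fun n z hz => g_bound (le_of_lt (abs_lt.mpr ⟨hz.1, hz.2⟩)))
    (y₀ := 0) ⟨by linarith, hr0⟩ ?_ hy
  apply summable_of_ne_finset_zero (s := {0})
  intro n hn
  simp [zero_pow (by simpa using hn : n ≠ 0)]

lemma hasDerivAt_F {r y : ℝ} (hr1 : r < 1) (hy : y ∈ Set.Ioo (-r) r) :
    HasDerivAt (fun z : ℝ => ∑' n : ℕ, cb n / (n:ℝ) * z ^ n)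
      (∑' n : ℕ, cb n / (n:ℝ) * ((n:ℝ) * y ^ (n-1))) y := by
  have hr0 : 0 < r := by
    rcases hy with ⟨h1, h2⟩; linarith
  refine hasDerivAt_tsum_of_isPreconnected
    (u := fun (n : ℕ) => r^(n-1)) (g := fun (n : ℕ) (z : ℝ) => cb n / (n:ℝ) * z ^ n)
    (g' := fun (n : ℕ) (z : ℝ) => cb n / (n:ℝ) * ((n:ℝ) * z ^ (n-1)))
    (summable_geom_shift hr0.le hr1) isOpen_Ioo (convex_Ioo _ _).isPreconnected
    (fun n z _ => (hasDerivAt_pow n z).const_mul (cb n / (n:ℝ)))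
    (fun n z hz => f_bound (le_of_lt (abs_lt.mpr ⟨hz.1, hz.2⟩)))
    (y₀ := 0) ⟨by linarith, hr0⟩ ?_ hy
  apply summable_of_ne_finset_zero (s := {0})
  intro n hn
  simp [zero_pow (by simpa using hn : n ≠ 0)]
lemma summable_deriv_series {y : ℝ} (hy : |y| < 1) :
    Summable (fun n : ℕ => cb n * ((n:ℝ) * y^(n-1))) :=
  Summable.of_norm_bounded (summable_mul_geom_shift (abs_nonneg y) hy)
    (fun n => g_bound (le_refl _))

lemma summable_T {y : ℝ} (hy : |y| < 1) :
    Summable (fun m : ℕ => (2*(m:ℝ)+1) * cb m * y^m) := by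
  apply smaster hy (C := 3)
  intro m
  rw [abs_mul, abs_mul, abs_pow, abs_of_nonneg (cb_nonneg m),
    abs_of_nonneg (by positivity : (0:ℝ) ≤ 2*(m:ℝ)+1)]
  have h1 : (2*(m:ℝ)+1) * cb m ≤ 3 * ((m:ℝ)+1) := by
    nlinarith [cb_le_one m, cb_nonneg m, Nat.cast_nonneg (α := ℝ) m]
  calc (2*(m:ℝ)+1) * cb m * |y|^m ≤ 3 * ((m:ℝ)+1) * |y|^m :=
        mul_le_mul_of_nonneg_right h1 (by positivity)
    _ = 3 * (((m:ℝ)+1) * |y|^m) := by ring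

lemma summable_2m {y : ℝ} (hy : |y| < 1) :
    Summable (fun m : ℕ => 2*(m:ℝ) * cb m * y^m) := by
  apply smaster hy (C := 2)
  intro m
  rw [abs_mul, abs_mul, abs_pow, abs_of_nonneg (cb_nonneg m),
    abs_of_nonneg (by positivity : (0:ℝ) ≤ 2*(m:ℝ))]
  have h1 : 2*(m:ℝ) * cb m ≤ 2 * ((m:ℝ)+1) := by
    nlinarith [cb_le_one m, cb_nonneg m, Nat.cast_nonneg (α := ℝ) m]
  calc 2*(m:ℝ) * cb m * |y|^m ≤ 2 * ((m:ℝ)+1) * |y|^m :=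
        mul_le_mul_of_nonneg_right h1 (by positivity)
    _ = 2 * (((m:ℝ)+1) * |y|^m) := by ring

lemma two_one_sub_deriv {y : ℝ} (hy : |y| < 1) :
    2*(1-y) * (∑' n : ℕ, cb n * ((n:ℝ) * y^(n-1))) = ∑' n : ℕ, cb n * y^n := by
  have sA := summable_cb_pow hy
  have sB := summable_deriv_series hy
  have sT := summable_T hy
  have s2 := summable_2m hy
  have e1 : (∑' n : ℕ, cb n * ((n:ℝ) * y^(n-1)))
      = (∑' m : ℕ, (2*(m:ℝ)+1) * cb m * y^m) / 2 := by
    rw [Summable.tsum_eq_zero_add sB]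
    have hterm : ∀ m : ℕ, cb (m+1) * (((m+1:ℕ):ℝ) * y^((m+1)-1))
        = ((2*(m:ℝ)+1) * cb m * y^m) / 2 := by
      intro m
      have h := cb_rec m
      push_cast [Nat.add_sub_cancel]
      linear_combination (y^m/2) * h
    rw [tsum_congr hterm, tsum_div_const]
    simp
  have e2 : (∑' m : ℕ, (2*(m:ℝ)+1) * cb m * y^m) - (∑' n : ℕ, cb n * y^n)
      = y * (∑' m : ℕ, (2*(m:ℝ)+1) * cb m * y^m) := by
    rw [← Summable.tsum_sub sT sA, ← tsum_mul_left]
    have l1 : (∑' m : ℕ, ((2*(m:ℝ)+1) * cb m * y^m - cb m * y^m))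
        = ∑' m : ℕ, 2*(m:ℝ) * cb m * y^m := tsum_congr fun m => by ring
    rw [l1, Summable.tsum_eq_zero_add s2]
    have hterm : ∀ m : ℕ, 2*((m+1:ℕ):ℝ) * cb (m+1) * y^(m+1)
        = y * ((2*(m:ℝ)+1) * cb m * y^m) := by
      intro m
      have h := cb_rec m
      push_cast
      linear_combination (y^(m+1)) * h
    rw [tsum_congr hterm]
    simp
  rw [e1]
  linear_combination e2

lemma genfun {x : ℝ} (hx0 : 0 ≤ x) (hx1 : x < 1) :
    (∑' n : ℕ, cb n * x ^ n) = 1 / Real.sqrt (1 - x) := by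
  have hxr : x < (1+x)/2 := by linarith
  have hr1 : (1+x)/2 < 1 := by linarith
  have hr0 : (0:ℝ) < (1+x)/2 := by linarith
  have key : ∀ y ∈ Set.Icc (0:ℝ) x,
      HasDerivAt (fun z : ℝ => Real.sqrt (1-z) * ∑' n : ℕ, cb n * z ^ n) 0 y := by
    intro y hy
    obtain ⟨hy0, hyx⟩ := hy
    have hy1 : y < 1 := lt_of_le_of_lt hyx hx1
    have hmem : y ∈ Set.Ioo (-((1+x)/2)) ((1+x)/2) := ⟨by linarith, by linarith⟩
    have hyabs : |y| < 1 := by rw [abs_of_nonneg hy0]; exact hy1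
    have hpos : (0:ℝ) < 1 - y := by linarith
    have hsqrt : 0 < Real.sqrt (1-y) := Real.sqrt_pos.mpr hpos
    have hinner : HasDerivAt (fun z : ℝ => 1 - z) (-1) y := by
      simpa using (hasDerivAt_id y).const_sub 1
    have hds : HasDerivAt (fun z : ℝ => Real.sqrt (1-z))
        (1/(2*Real.sqrt (1-y)) * (-1)) y := by
      exact (Real.hasDerivAt_sqrt hpos.ne').comp y hinner
    have hdG := hasDerivAt_G hr1 hmem
    have hprod := hds.mul hdG
    refine hprod.congr_deriv (Eq.symm ?_)
    have hkey := two_one_sub_deriv hyabs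
    have hs2 : Real.sqrt (1-y) ^ 2 = 1 - y := Real.sq_sqrt hpos.le
    have hG' : (∑' n : ℕ, cb n * ((n:ℝ) * y^(n-1)))
        = (∑' n : ℕ, cb n * y^n) / (2*(1-y)) := by
      rw [eq_div_iff (mul_pos two_pos hpos).ne']
      linear_combination hkey
    rw [hG', ← hs2]
    field_simp
    have ht : Real.sqrt (Real.sqrt (1-y) ^ 2) ^ 2 = 1 - y := by rw [hs2]; exact hs2
    linear_combination (∑' (n : ℕ), cb n * y ^ n) * hs2 - (∑' (n : ℕ), cb n * y ^ n) * ht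
  have hcont : ContinuousOn (fun z : ℝ => Real.sqrt (1-z) * ∑' n : ℕ, cb n * z ^ n)
      (Set.Icc 0 x) := fun y hy => ((key y hy).continuousAt).continuousWithinAt
  have hconst := constant_of_has_deriv_right_zero hcont
    (fun y hy => (key y ⟨hy.1, hy.2.le⟩).hasDerivWithinAt) x
    (Set.mem_Icc.mpr ⟨hx0, le_refl x⟩)
  have hG0 : (∑' n : ℕ, cb n * (0:ℝ) ^ n) = 1 := by
    rw [tsum_eq_single 0 (fun n hn => by simp [zero_pow hn])]
    simp [cb_zero]
  rw [hG0] at hconst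
  simp only [sub_zero, Real.sqrt_one, mul_one] at hconst
  have hs : Real.sqrt (1-x) ≠ 0 := (Real.sqrt_pos.mpr (by linarith)).ne'
  rw [eq_div_iff hs, mul_comm]
  exact hconst
lemma Fderiv_val {y : ℝ} (hy0 : 0 ≤ y) (hy1 : y < 1) :
    (∑' n : ℕ, cb n / (n:ℝ) * ((n:ℝ) * y^(n-1)))
      = 1/(Real.sqrt (1-y) * (1 + Real.sqrt (1-y))) := by
  have hyabs : |y| < 1 := by rwa [abs_of_nonneg hy0]
  have sB : Summable (fun n : ℕ => cb n / (n:ℝ) * ((n:ℝ) * y^(n-1))) :=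
    Summable.of_norm_bounded (summable_geom_shift (abs_nonneg y) hyabs)
      (fun n => f_bound (le_refl _))
  have step : (∑' n : ℕ, cb n / (n:ℝ) * ((n:ℝ) * y^(n-1))) = ∑' m : ℕ, cb (m+1) * y^m := by
    rw [Summable.tsum_eq_zero_add sB]
    have hterm : ∀ m : ℕ, cb (m+1) / ((m+1:ℕ):ℝ) * (((m+1:ℕ):ℝ) * y^((m+1)-1))
        = cb (m+1) * y^m := by
      intro m
      have hm : ((m:ℝ)+1) ≠ 0 := by positivity
      push_cast [Nat.add_sub_cancel]
      field_simp
    rw [tsum_congr hterm]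
    simp
  rw [step]
  set s := Real.sqrt (1-y) with hs
  have hspos : 0 < s := Real.sqrt_pos.mpr (by linarith)
  have hs2 : s^2 = 1-y := Real.sq_sqrt (by linarith)
  by_cases hzero : y = 0
  · subst hzero
    rw [tsum_eq_single 0 (fun n hn => by simp [zero_pow hn])]
    rw [show s = 1 by rw [hs]; simp]
    norm_num [cb_one]
  · have hypos : 0 < y := hy0.lt_of_ne (Ne.symm hzero)
    have hgen := genfun hy0 hy1
    have sA := summable_cb_pow hyabs
    have hsplit := Summable.tsum_eq_zero_add sA
    have hmul : y * (∑' m : ℕ, cb (m+1) * y^m) = ∑' m : ℕ, cb (m+1) * y^(m+1) := by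
      rw [← tsum_mul_left]
      exact tsum_congr fun m => by ring
    have hval : y * (∑' m : ℕ, cb (m+1) * y^m) = 1/s - 1 := by
      rw [hmul]
      rw [hgen] at hsplit
      simp only [cb_zero, pow_zero, mul_one] at hsplit
      rw [← hs] at hsplit
      linarith
    have h1s : 1 + s ≠ 0 := by positivity
    have hfac : (1 - s)*(1+s) = y := by nlinarith [hs2]
    have hexp : (∑' m : ℕ, cb (m+1) * y^m) = (1/s - 1)/y := by
      rw [eq_div_iff hzero, mul_comm]
      exact hval
    rw [hexp, ← hfac]
    have hs1 : (1:ℝ) - s ≠ 0 := by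
      intro h
      have : s = 1 := by linarith
      rw [this] at hs2
      simp at hs2
      exact hzero (by linarith)
    field_simp
lemma logfun {x : ℝ} (hx0 : 0 ≤ x) (hx1 : x < 1) :
    (∑' n : ℕ, cb n / (n:ℝ) * x ^ n)
      = 2*Real.log 2 - 2*Real.log (1 + Real.sqrt (1-x)) := by
  have hxr : x < (1+x)/2 := by linarith
  have hr1 : (1+x)/2 < 1 := by linarith
  have hr0 : (0:ℝ) < (1+x)/2 := by linarith
  have key : ∀ y ∈ Set.Icc (0:ℝ) x,
      HasDerivAt (fun z : ℝ => (∑' n : ℕ, cb n / (n:ℝ) * z ^ n)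
        + 2*Real.log (1 + Real.sqrt (1-z))) 0 y := by
    intro y hy
    obtain ⟨hy0, hyx⟩ := hy
    have hy1 : y < 1 := lt_of_le_of_lt hyx hx1
    have hmem : y ∈ Set.Ioo (-((1+x)/2)) ((1+x)/2) := ⟨by linarith, by linarith⟩
    have hpos : (0:ℝ) < 1 - y := by linarith
    have hsqrt : 0 < Real.sqrt (1-y) := Real.sqrt_pos.mpr hpos
    have hinner : HasDerivAt (fun z : ℝ => 1 - z) (-1) y := by
      simpa using (hasDerivAt_id y).const_sub 1
    have hds : HasDerivAt (fun z : ℝ => 1 + Real.sqrt (1-z))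
        (1/(2*Real.sqrt (1-y)) * (-1)) y :=
      ((Real.hasDerivAt_sqrt hpos.ne').comp y hinner).const_add 1
    have hlog : HasDerivAt (fun z : ℝ => Real.log (1 + Real.sqrt (1-z)))
        ((1/(2*Real.sqrt (1-y)) * (-1)) / (1 + Real.sqrt (1-y))) y :=
      hds.log (by positivity)
    have hdF := hasDerivAt_F hr1 hmem
    have htot := hdF.add (hlog.const_mul 2)
    refine htot.congr_deriv (Eq.symm ?_)
    rw [Fderiv_val hy0 hy1]
    field_simp
    ring
  have hcont : ContinuousOn (fun z : ℝ => (∑' n : ℕ, cb n / (n:ℝ) * z ^ n)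
      + 2*Real.log (1 + Real.sqrt (1-z))) (Set.Icc 0 x) :=
    fun y hy => ((key y hy).continuousAt).continuousWithinAt
  have hconst := constant_of_has_deriv_right_zero hcont
    (fun y hy => (key y ⟨hy.1, hy.2.le⟩).hasDerivWithinAt) x
    (Set.mem_Icc.mpr ⟨hx0, le_refl x⟩)
  have hF0 : (∑' n : ℕ, cb n / (n:ℝ) * (0:ℝ) ^ n) = 0 := by
    have : ∀ n : ℕ, cb n / (n:ℝ) * (0:ℝ) ^ n = 0 := by
      intro n
      cases n with
      | zero => simp
      | succ m => simp [zero_pow (Nat.succ_ne_zero m)]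
    rw [tsum_congr this, tsum_zero]
  rw [hF0] at hconst
  simp only [sub_zero, Real.sqrt_one, zero_add] at hconst
  have h12 : (1:ℝ) + 1 = 2 := by norm_num
  rw [h12] at hconst
  linarith [hconst]
lemma summable_cb_div : Summable (fun n : ℕ => cb n / (n:ℝ)) := by
  apply Summable.of_norm_bounded
    (Real.summable_one_div_nat_rpow.mpr (by norm_num : (1:ℝ) < 3/2))
  intro n
  rw [Real.norm_eq_abs, abs_of_nonneg (div_nonneg (cb_nonneg n) (Nat.cast_nonneg n))]
  cases n with
  | zero => simp [Real.zero_rpow (by norm_num : (3:ℝ)/2 ≠ 0)]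
  | succ m =>
    have hn : (0:ℝ) < ((m+1:ℕ):ℝ) := by positivity
    have hsq := cb_sq_le (m+1)
    have h1 : (cb (m+1) / ((m+1:ℕ):ℝ))^2 ≤ 1/((m+1:ℕ):ℝ)^3 := by
      rw [div_pow, div_le_div_iff₀ (by positivity) (by positivity)]
      calc cb (m+1)^2 * ((m+1:ℕ):ℝ)^3
          ≤ cb (m+1)^2 * (2*((m+1:ℕ):ℝ)+1) * ((m+1:ℕ):ℝ)^2 := by
            nlinarith [mul_nonneg (sq_nonneg (cb (m+1)))
              (by positivity : (0:ℝ) ≤ ((m+1:ℕ):ℝ)^2 * (((m+1:ℕ):ℝ)+1))]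
        _ ≤ 1 * ((m+1:ℕ):ℝ)^2 := mul_le_mul_of_nonneg_right hsq (by positivity)
    have h2 : (0:ℝ) ≤ 1/((m+1:ℕ):ℝ)^((3:ℝ)/2) := by positivity
    apply le_of_pow_le_pow_left₀ two_ne_zero h2
    calc (cb (m+1) / ((m+1:ℕ):ℝ))^2 ≤ 1/((m+1:ℕ):ℝ)^3 := h1
      _ = (1/((m+1:ℕ):ℝ)^((3:ℝ)/2))^2 := by
        rw [div_pow, one_pow]
        congr 1
        rw [← Real.rpow_natCast (((m+1:ℕ):ℝ)^((3:ℝ)/2)) 2, ← Real.rpow_mul hn.le]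
        norm_num

theorem stmt_0 :
    ∑' n : ℕ, ((Nat.choose (2 * (n + 1)) (n + 1) : ℝ) / 4 ^ (n + 1)) / ((n : ℝ) + 1) =
    2 * Real.log 2 := by
  have hsum := summable_cb_div
  have habel := Real.tendsto_tsum_powerSeries_nhdsWithin_lt hsum.hasSum.tendsto_sum_nat
  have hcongr : (fun y : ℝ => ∑' n : ℕ, cb n / (n:ℝ) * y^n)
      =ᶠ[nhdsWithin 1 (Set.Iio 1)]
      (fun y : ℝ => 2*Real.log 2 - 2*Real.log (1 + Real.sqrt (1-y))) := by
    filter_upwards [Ioo_mem_nhdsLT_of_mem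
      (Set.mem_Ioc.mpr ⟨zero_lt_one, le_refl (1:ℝ)⟩)] with y hy
    exact logfun hy.1.le hy.2
  have h2 := habel.congr' hcongr
  have h3 : Filter.Tendsto (fun y : ℝ => 2*Real.log 2 - 2*Real.log (1 + Real.sqrt (1-y)))
      (nhdsWithin 1 (Set.Iio 1)) (nhds (2*Real.log 2)) := by
    have hc : ContinuousAt (fun y : ℝ => 2*Real.log 2 - 2*Real.log (1 + Real.sqrt (1-y))) 1 := by
      have h1 : ContinuousAt (fun y : ℝ => 1 + Real.sqrt (1-y)) 1 := by fun_prop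
      have hne : (1:ℝ) + Real.sqrt (1-1) ≠ 0 := by simp
      exact continuousAt_const.sub ((h1.log hne).const_mul 2)
    have := hc.tendsto.mono_left (nhdsWithin_le_nhds (s := Set.Iio (1:ℝ)))
    simpa [Real.sqrt_zero, Real.log_one] using this
  have hlim : (∑' n : ℕ, cb n / (n:ℝ)) = 2*Real.log 2 := tendsto_nhds_unique h2 h3
  have hshift := Summable.tsum_eq_zero_add hsum
  rw [hlim] at hshift
  have hz : cb 0 / ((0:ℕ):ℝ) = 0 := by simp
  rw [hz, zero_add] at hshift
  rw [hshift]
  apply tsum_congr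
  intro n
  show _ = cb (n+1) / ((n+1:ℕ):ℝ)
  rw [show cb (n+1) = (Nat.choose (2*(n+1)) (n+1) : ℝ) / 4 ^ (n+1) from rfl]
  push_cast
  ring
end

section
/- The series ∑_{n=1}^∞ 4^n / (n^2 · C(2n,n)) equals 3ζ(2). -/
open Real Finset

section Aux
open Real intervalIntegral MeasureTheory

noncomputable def J (n : ℕ) : ℝ := ∫ t in (0:ℝ)..1, (1 - t^2)^n

lemma J_zero : J 0 = 1 := by simp [J]

lemma J_cont (n : ℕ) : Continuous fun t : ℝ => (1 - t^2)^n := by continuity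

lemma J_rec (n : ℕ) : (2*(n:ℝ)+3) * J (n+1) = (2*(n:ℝ)+2) * J n := by
  have key : ∀ t : ℝ, HasDerivAt (fun t : ℝ => t * (1 - t^2)^(n+1))
      ((2*(n:ℝ)+3) * (1 - t^2)^(n+1) - (2*(n:ℝ)+2) * (1 - t^2)^n) t := by
    intro t
    have hg : HasDerivAt (fun t : ℝ => 1 - t^2) (-(2*t)) t := by
      simpa using ((hasDerivAt_pow 2 t).const_sub 1)
    have h1 : HasDerivAt (fun t : ℝ => t * (1 - t^2)^(n+1))
        (1 * (1 - t^2)^(n+1) + t * (((n:ℝ)+1) * (1 - t^2)^n * (-(2*t)))) t := by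
      have h := (hasDerivAt_id t).mul (hg.pow (n+1))
      simp only [id] at h
      exact h.congr_deriv (by simp only [Pi.pow_apply]; push_cast; ring)
    convert h1 using 1
    have h2 : (1 - t^2)^(n+1) = (1 - t^2)^n * (1 - t^2) := by ring
    rw [h2]; push_cast; ring
  have hint : ∀ m : ℕ, IntervalIntegrable (fun t : ℝ => (1 - t^2)^m) volume 0 1 :=
    fun m => (J_cont m).intervalIntegrable _ _
  have hint2 : IntervalIntegrable
      (fun t : ℝ => (2*(n:ℝ)+3) * (1 - t^2)^(n+1) - (2*(n:ℝ)+2) * (1 - t^2)^n) volume 0 1 :=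
    ((continuous_const.mul (J_cont (n+1))).sub (continuous_const.mul (J_cont n))).intervalIntegrable 0 1
  have heq := integral_eq_sub_of_hasDerivAt (fun t _ => key t) hint2
  rw [integral_sub ((hint (n+1)).const_mul _) ((hint n).const_mul _),
    intervalIntegral.integral_const_mul, intervalIntegral.integral_const_mul] at heq
  have h0 : (1:ℝ) * (1 - 1^2)^(n+1) - 0 * (1 - 0^2)^(n+1) = 0 := by norm_num
  rw [h0] at heq
  unfold J
  linarith

lemma J_closed (n : ℕ) : ((2*n+1).factorial : ℝ) * J n = 4^n * ((n.factorial : ℝ))^2 := by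
  induction n with
  | zero => simp [J_zero]
  | succ n ih =>
    have h1 : (2*(n+1)+1) = (2*n+1) + 2 := by ring
    have hrec := J_rec n
    have hfac : ((2*(n+1)+1).factorial : ℝ) = (2*(n:ℝ)+3) * (2*(n:ℝ)+2) * ((2*n+1).factorial : ℝ) := by
      rw [h1]
      rw [show (2*n+1)+2 = ((2*n+1)+1)+1 from rfl]
      rw [Nat.factorial_succ, Nat.factorial_succ]
      push_cast; ring
    rw [hfac]
    have : (2*(n:ℝ)+3) * (2*(n:ℝ)+2) * ((2*n+1).factorial : ℝ) * J (n+1)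
        = (2*(n:ℝ)+2) * ((2*n+1).factorial : ℝ) * ((2*(n:ℝ)+3) * J (n+1)) := by ring
    rw [this, hrec]
    have hns : ((n+1).factorial : ℝ) = ((n:ℝ)+1) * (n.factorial : ℝ) := by
      rw [Nat.factorial_succ]; push_cast; ring
    rw [hns]
    linear_combination (2*(n:ℝ)+2)^2 * ih

lemma J_nonneg (n : ℕ) : 0 ≤ J n := by
  apply intervalIntegral.integral_nonneg (by norm_num)
  intro t ht
  have h1 : t^2 ≤ 1 := by nlinarith [ht.1, ht.2]
  exact pow_nonneg (by linarith) n

lemma J_pos_fac : ∀ n : ℕ, (0:ℝ) < (n.factorial : ℝ) := fun n => by positivity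

lemma J_le (n : ℕ) : J n ≤ 1 / Real.sqrt ((n:ℝ)+1) := by
  induction n with
  | zero => simp [J_zero]
  | succ n ih =>
    push_cast
    rw [show ((n:ℝ)+1+1) = (n:ℝ)+2 by ring]
    have hrec := J_rec n
    have hJ : J (n+1) = (2*(n:ℝ)+2)/(2*(n:ℝ)+3) * J n := by
      field_simp at hrec ⊢; linarith
    rw [hJ]
    have h1 : (0:ℝ) < Real.sqrt ((n:ℝ)+1) := Real.sqrt_pos.mpr (by positivity)
    have h2 : (0:ℝ) < Real.sqrt ((n:ℝ)+2) := Real.sqrt_pos.mpr (by positivity)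
    have key : (2*(n:ℝ)+2) * Real.sqrt ((n:ℝ)+2) ≤ (2*(n:ℝ)+3) * Real.sqrt ((n:ℝ)+1) := by
      have hsq1 : Real.sqrt ((n:ℝ)+1)^2 = (n:ℝ)+1 := Real.sq_sqrt (by positivity)
      have hsq2 : Real.sqrt ((n:ℝ)+2)^2 = (n:ℝ)+2 := Real.sq_sqrt (by positivity)
      have h3 : ((2*(n:ℝ)+2) * Real.sqrt ((n:ℝ)+2))^2 ≤ ((2*(n:ℝ)+3) * Real.sqrt ((n:ℝ)+1))^2 := by
        rw [mul_pow, mul_pow, hsq1, hsq2]; nlinarith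
      have h4 := Real.sqrt_le_sqrt h3
      rwa [Real.sqrt_sq (by positivity), Real.sqrt_sq (by positivity)] at h4
    have hnn : (0:ℝ) ≤ (2*(n:ℝ)+2)/(2*(n:ℝ)+3) := by positivity
    calc (2*(n:ℝ)+2)/(2*(n:ℝ)+3) * J n ≤ (2*(n:ℝ)+2)/(2*(n:ℝ)+3) * (1 / Real.sqrt ((n:ℝ)+1)) :=
          mul_le_mul_of_nonneg_left ih hnn
      _ ≤ 1 / Real.sqrt ((n:ℝ)+2) := by
          rw [div_mul_div_comm, div_le_div_iff₀ (by positivity) h2]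
          nlinarith [key]

lemma term_eq (n : ℕ) :
    (4^(n+1):ℝ)/(((n:ℝ)+1)^2 * ((2*(n+1)).choose (n+1) : ℝ)) = 2/((n:ℝ)+1) * J n := by
  have h0 : (2*(n+1)) - (n+1) = n+1 := by omega
  have hC0 := Nat.choose_mul_factorial_mul_factorial (show n+1 ≤ 2*(n+1) by omega)
  rw [h0] at hC0
  have hC : ((2*(n+1)).choose (n+1) : ℝ) * ((n+1).factorial:ℝ) * ((n+1).factorial:ℝ)
      = ((2*(n+1)).factorial : ℝ) := by exact_mod_cast congrArg Nat.cast hC0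
  have hfac2 : ((2*(n+1)).factorial : ℝ) = (2*(n:ℝ)+2) * ((2*n+1).factorial : ℝ) := by
    rw [show 2*(n+1) = (2*n+1)+1 by ring, Nat.factorial_succ]; push_cast; ring
  have hfac1 : ((n+1).factorial:ℝ) = ((n:ℝ)+1)*(n.factorial:ℝ) := by
    rw [Nat.factorial_succ]; push_cast; ring
  have hJ := J_closed n
  have hCpos : (0:ℝ) < ((2*(n+1)).choose (n+1) : ℝ) := by
    exact_mod_cast Nat.choose_pos (show n+1 ≤ 2*(n+1) by omega)
  have hfp : (0:ℝ) < ((2*n+1).factorial : ℝ) := by positivity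
  have hnp : (0:ℝ) < (n.factorial : ℝ) := by positivity
  have hn1 : (0:ℝ) < (n:ℝ)+1 := by positivity
  rw [hfac2, hfac1] at hC
  have hJn : J n = 4^n * (n.factorial:ℝ)^2 / ((2*n+1).factorial:ℝ) := by
    field_simp; linarith [hJ]
  rw [hJn]
  field_simp
  linear_combination (norm := skip) (-2*4^n/((n:ℝ)+1)) * hC
  field_simp
  ring

open Set in
lemma gamma2 : ∫ x in Set.Ioi (0:ℝ), Real.exp (-x) * x = 1 := by
  have h := Real.Gamma_eq_integral (by norm_num : (0:ℝ) < 2)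
  have h2 : Real.Gamma 2 = 1 := by
    have := Real.Gamma_nat_eq_factorial 1
    norm_num at this
    convert this using 2
    norm_num
  rw [h2] at h
  rw [h]
  apply setIntegral_congr_fun measurableSet_Ioi
  intro x hx
  norm_num [Real.rpow_one]

open Set in
lemma exp_int (m : ℕ) : ∫ x in Set.Ioi (0:ℝ), Real.exp (-(((m:ℝ)+1)*x)) * x = 1/((m:ℝ)+1)^2 := by
  have hb : (0:ℝ) < (m:ℝ)+1 := by positivity
  have h := integral_comp_mul_left_Ioi (fun y => Real.exp (-y) * y) 0 hb
  simp only [mul_zero, smul_eq_mul] at h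
  rw [gamma2] at h
  have h2 : (∫ x in Set.Ioi (0:ℝ), Real.exp (-(((m:ℝ)+1)*x)) * (((m:ℝ)+1)*x)) = ((m:ℝ)+1)⁻¹ := by
    rw [h]; norm_num
  have h3 : (∫ x in Set.Ioi (0:ℝ), Real.exp (-(((m:ℝ)+1)*x)) * (((m:ℝ)+1)*x))
      = ((m:ℝ)+1) * ∫ x in Set.Ioi (0:ℝ), Real.exp (-(((m:ℝ)+1)*x)) * x := by
    rw [← MeasureTheory.integral_const_mul]
    congr 1; ext x; ring
  rw [h3] at h2
  field_simp at h2 ⊢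
  linarith

open Set in
lemma log_int (m : ℕ) :
    ∫ t in Set.Ioo (0:ℝ) 1, t^m * (-Real.log t) = 1/((m:ℝ)+1)^2 := by
  have hderiv : ∀ x ∈ Set.Ioi (0:ℝ),
      HasDerivWithinAt (fun x : ℝ => Real.exp (-x)) (-Real.exp (-x)) (Set.Ioi 0) x := by
    intro x _
    have h := (Real.hasDerivAt_exp (-x)).comp x (hasDerivAt_neg x)
    simpa [mul_comm, Function.comp_def] using h.hasDerivWithinAt
  have hinj : InjOn (fun x : ℝ => Real.exp (-x)) (Set.Ioi 0) := by
    intro a _ b _ hab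
    simpa using Real.exp_injective hab
  have himg : (fun x : ℝ => Real.exp (-x)) '' (Set.Ioi 0) = Set.Ioo 0 1 := by
    ext y
    constructor
    · rintro ⟨x, hx, rfl⟩
      exact ⟨Real.exp_pos _, by
        rw [Real.exp_lt_one_iff]; simpa using (mem_Ioi.mp hx)⟩
    · intro hy
      exact ⟨-Real.log y, by simpa using Real.log_neg hy.1 hy.2, by
        simp [Real.exp_log hy.1]⟩
  have key := integral_image_eq_integral_abs_deriv_smul measurableSet_Ioi hderiv hinj
    (fun t => t^m * (-Real.log t))
  rw [himg] at key
  rw [key, ← exp_int m]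
  apply setIntegral_congr_fun measurableSet_Ioi
  intro x hx
  simp only [smul_eq_mul, abs_neg, abs_of_pos (Real.exp_pos _), Real.log_exp]
  rw [← Real.exp_nat_mul]
  rw [show Real.exp (-x) * (Real.exp ((m:ℝ) * -x) * - -x)
      = Real.exp (-x) * Real.exp ((m:ℝ)*-x) * x by ring, ← Real.exp_add,
    show -x + (m:ℝ)*-x = -(((m:ℝ)+1)*x) by ring]

open Set MeasureTheory in
lemma J_Ioo (n : ℕ) : ∫ t in Set.Ioo (0:ℝ) 1, (1 - t^2)^n = J n := by
  rw [J, intervalIntegral.integral_of_le (by norm_num : (0:ℝ) ≤ 1),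
    integral_Ioc_eq_integral_Ioo]

lemma summable_A : Summable (fun n : ℕ => 2/((n:ℝ)+1) * J n) := by
  have h1 : Summable (fun n : ℕ => (((n:ℝ)+1) ^ (3/2:ℝ))⁻¹) := by
    have h0 := Real.summable_nat_rpow_inv.mpr (show (1:ℝ) < 3/2 by norm_num)
    have h2 := (summable_nat_add_iff (f := fun n : ℕ => (((n:ℝ)) ^ (3/2:ℝ))⁻¹) 1).mpr h0
    simpa using h2
  apply Summable.of_nonneg_of_le
    (fun n => mul_nonneg (by positivity) (J_nonneg n)) _ (h1.mul_left 2)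
  intro n
  have hpos : (0:ℝ) < (n:ℝ)+1 := by positivity
  have hs : Real.sqrt ((n:ℝ)+1) > 0 := Real.sqrt_pos.mpr hpos
  have hr : (((n:ℝ)+1) ^ (3/2:ℝ)) = ((n:ℝ)+1) * Real.sqrt ((n:ℝ)+1) := by
    rw [show (3/2:ℝ) = 1 + 1/2 by norm_num, Real.rpow_add hpos, Real.rpow_one,
      Real.sqrt_eq_rpow]
  rw [hr]
  have := J_le n
  rw [mul_inv]
  calc 2/((n:ℝ)+1) * J n ≤ 2/((n:ℝ)+1) * (1 / Real.sqrt ((n:ℝ)+1)) := by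
        apply mul_le_mul_of_nonneg_left this (by positivity)
    _ = 2 * (((n:ℝ)+1)⁻¹ * (Real.sqrt ((n:ℝ)+1))⁻¹) := by field_simp

open Set MeasureTheory in
lemma int_F (n : ℕ) : ∫ t in Set.Ioo (0:ℝ) 1, 2/((n:ℝ)+1) * (1-t^2)^n = 2/((n:ℝ)+1) * J n := by
  rw [MeasureTheory.integral_const_mul, J_Ioo]

open Set MeasureTheory in
lemma tonelli1 :
    ∑' n : ℕ, (2/((n:ℝ)+1) * J n)
      = ∫ t in Set.Ioo (0:ℝ) 1, (∑' n : ℕ, 2/((n:ℝ)+1) * (1-t^2)^n) := by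
  have hInt : ∀ n : ℕ, IntegrableOn (fun t : ℝ => 2/((n:ℝ)+1) * (1-t^2)^n) (Set.Ioo 0 1) :=
    fun n => ((continuous_const.mul (J_cont n)).integrableOn_Icc (a := (0:ℝ)) (b := 1)).mono_set
      Ioo_subset_Icc_self
  have hNorm : ∀ n : ℕ,
      (∫ t in Set.Ioo (0:ℝ) 1, ‖2/((n:ℝ)+1) * (1-t^2)^n‖) = 2/((n:ℝ)+1) * J n := by
    intro n
    rw [← int_F n]
    apply setIntegral_congr_fun measurableSet_Ioo
    intro t ht
    have h1 : (0:ℝ) ≤ 1 - t^2 := by nlinarith [ht.1, ht.2]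
    have h2 : (0:ℝ) ≤ 2/((n:ℝ)+1) * (1-t^2)^n :=
      mul_nonneg (by positivity) (pow_nonneg h1 n)
    simp only [Real.norm_eq_abs, abs_of_nonneg h2]
  have := integral_tsum_of_summable_integral_norm (μ := volume.restrict (Set.Ioo (0:ℝ) 1))
    hInt (by simpa only [hNorm] using summable_A)
  rw [← this]
  exact tsum_congr fun n => (int_F n).symm

lemma pointwise_eq {t : ℝ} (ht : t ∈ Set.Ioo (0:ℝ) 1) :
    (∑' n : ℕ, 2/((n:ℝ)+1) * (1-t^2)^n) = ∑' k : ℕ, 4 * t^(2*k) * (-Real.log t) := by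
  obtain ⟨h0, h1⟩ := ht
  have ht2 : 0 < 1 - t^2 := by nlinarith
  have ht2' : 1 - t^2 < 1 := by nlinarith
  have habs : |1 - t^2| < 1 := by rw [abs_of_pos ht2]; exact ht2'
  have hA0 := hasSum_pow_div_log_of_abs_lt_one habs
  have hlog : -Real.log (1 - (1-t^2)) = -(2*Real.log t) := by
    rw [show (1:ℝ) - (1-t^2) = t^2 by ring, Real.log_pow]
    push_cast; ring
  rw [hlog] at hA0
  have hA := hA0.mul_left (2/(1-t^2))
  have hfun1 : (fun n : ℕ => 2/(1-t^2) * ((1-t^2)^(n+1)/((n:ℕ)+1 : ℝ))) =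
      fun n : ℕ => 2/((n:ℝ)+1) * (1-t^2)^n := by
    funext n
    push_cast
    rw [pow_succ]
    rw [div_eq_mul_inv, div_eq_mul_inv, div_eq_mul_inv]
    have hc : (1-t^2)⁻¹ * (1-t^2) = 1 := inv_mul_cancel₀ ht2.ne'
    linear_combination (2*((n:ℝ)+1)⁻¹*(1-t^2)^n) * hc
  rw [hfun1] at hA
  have hB0 := hasSum_geometric_of_lt_one (sq_nonneg t) (by nlinarith : t^2 < 1)
  have hB := hB0.mul_left (4 * (-Real.log t))
  have hfun2 : (fun k : ℕ => 4 * (-Real.log t) * (t^2)^k) =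
      fun k : ℕ => 4 * t^(2*k) * (-Real.log t) := by
    funext k; rw [pow_mul]; ring
  rw [hfun2] at hB
  rw [hA.tsum_eq, hB.tsum_eq, div_eq_mul_inv]
  ring

open Set MeasureTheory in
lemma integrable_G (k : ℕ) :
    IntegrableOn (fun t : ℝ => 4 * t^(2*k) * (-Real.log t)) (Set.Ioo (0:ℝ) 1) := by
  have hderiv : ∀ x ∈ Set.Ioi (0:ℝ),
      HasDerivWithinAt (fun x : ℝ => Real.exp (-x)) (-Real.exp (-x)) (Set.Ioi 0) x := by
    intro x _
    have h := (Real.hasDerivAt_exp (-x)).comp x (hasDerivAt_neg x)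
    simpa [mul_comm, Function.comp_def] using h.hasDerivWithinAt
  have hinj : InjOn (fun x : ℝ => Real.exp (-x)) (Set.Ioi 0) := by
    intro a _ b _ hab
    simpa using Real.exp_injective hab
  have himg : (fun x : ℝ => Real.exp (-x)) '' (Set.Ioi 0) = Set.Ioo 0 1 := by
    ext y
    constructor
    · rintro ⟨x, hx, rfl⟩
      exact ⟨Real.exp_pos _, by
        rw [Real.exp_lt_one_iff]; simpa using (mem_Ioi.mp hx)⟩
    · intro hy
      exact ⟨-Real.log y, by simpa using Real.log_neg hy.1 hy.2, by
        simp [Real.exp_log hy.1]⟩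
  rw [← himg, integrableOn_image_iff_integrableOn_abs_deriv_smul measurableSet_Ioi hderiv hinj]
  have hfun : (fun x : ℝ => |(-Real.exp (-x))| • (4 * (Real.exp (-x))^(2*k) * (-Real.log (Real.exp (-x)))))
      = fun x : ℝ => Real.exp (-x) * ((Real.exp (-x))^(2*k) * (4*x)) := by
    funext x
    rw [Real.log_exp, abs_neg, abs_of_pos (Real.exp_pos _), smul_eq_mul]
    ring
  rw [hfun]
  have hg : IntegrableOn (fun x : ℝ => Real.exp (-x) * x) (Set.Ioi 0) := by
    have h2 := Real.GammaIntegral_convergent (show (0:ℝ) < 2 by norm_num)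
    apply h2.congr_fun ?_ measurableSet_Ioi
    intro x hx
    norm_num [Real.rpow_one]
  apply Integrable.mono (hg.smul (4:ℝ))
  · apply Continuous.aestronglyMeasurable
    have : Continuous fun x : ℝ => Real.exp (-x) := Real.continuous_exp.comp continuous_neg
    continuity
  · rw [ae_restrict_iff' measurableSet_Ioi]
    apply Filter.Eventually.of_forall
    intro x hx
    have hx0 : (0:ℝ) < x := hx
    have he1 : Real.exp (-x) ≤ 1 := Real.exp_le_one_iff.mpr (by linarith)
    have he0 : (0:ℝ) < Real.exp (-x) := Real.exp_pos _
    have hp : (Real.exp (-x))^(2*k) ≤ 1 := pow_le_one₀ he0.le he1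
    simp only [Pi.smul_apply, smul_eq_mul, Real.norm_eq_abs]
    rw [abs_of_nonneg (by positivity), abs_of_nonneg (by positivity)]
    calc Real.exp (-x) * ((Real.exp (-x))^(2*k) * (4*x))
        ≤ Real.exp (-x) * (1 * (4*x)) := by
          apply mul_le_mul_of_nonneg_left _ he0.le
          apply mul_le_mul_of_nonneg_right hp (by positivity)
      _ = 4 * (Real.exp (-x) * x) := by ring

open Set MeasureTheory in
lemma int_G (k : ℕ) :
    ∫ t in Set.Ioo (0:ℝ) 1, 4 * t^(2*k) * (-Real.log t) = 4/((2*(k:ℝ))+1)^2 := by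
  have h : (fun t : ℝ => 4 * t^(2*k) * (-Real.log t))
      = fun t : ℝ => 4 * (t^(2*k) * (-Real.log t)) := by funext t; ring
  rw [h, MeasureTheory.integral_const_mul, log_int (2*k)]
  push_cast
  ring

lemma summable_G : Summable (fun k : ℕ => 4/((2*(k:ℝ))+1)^2) := by
  have h1 : Summable (fun k : ℕ => 4 * (1/((k:ℝ)+1)^2)) := by
    apply Summable.mul_left
    have h0 := Real.summable_one_div_nat_pow.mpr (show 1 < 2 by norm_num)
    have h2 := (summable_nat_add_iff (f := fun n : ℕ => 1/((n:ℝ))^2) 1).mpr h0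
    simpa using h2
  apply Summable.of_nonneg_of_le (fun k => by positivity) _ h1
  intro k
  have : ((k:ℝ)+1)^2 ≤ (2*(k:ℝ)+1)^2 := by nlinarith [Nat.cast_nonneg (α := ℝ) k]
  rw [div_le_iff₀ (by positivity)]
  have hinv : 4 * (1/((k:ℝ)+1)^2) * ((k:ℝ)+1)^2 = 4 := by field_simp
  nlinarith [mul_le_mul_of_nonneg_left this (show (0:ℝ) ≤ 4*(1/((k:ℝ)+1)^2) by positivity)]

open Set MeasureTheory in
lemma tonelli2 :
    ∫ t in Set.Ioo (0:ℝ) 1, (∑' k : ℕ, 4 * t^(2*k) * (-Real.log t))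
      = ∑' k : ℕ, (4:ℝ)/((2*(k:ℝ))+1)^2 := by
  have hNorm : ∀ k : ℕ,
      (∫ t in Set.Ioo (0:ℝ) 1, ‖4 * t^(2*k) * (-Real.log t)‖) = 4/((2*(k:ℝ))+1)^2 := by
    intro k
    rw [← int_G k]
    apply setIntegral_congr_fun measurableSet_Ioo
    intro t ht
    have hl : 0 ≤ -Real.log t := by
      rw [neg_nonneg]
      exact (Real.log_nonpos_iff ht.1.le).mpr ht.2.le
    have h2 : (0:ℝ) ≤ 4 * t^(2*k) * (-Real.log t) :=
      mul_nonneg (mul_nonneg (by norm_num) (pow_nonneg ht.1.le _)) hl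
    simp only [Real.norm_eq_abs, abs_of_nonneg h2]
  have := integral_tsum_of_summable_integral_norm (μ := volume.restrict (Set.Ioo (0:ℝ) 1))
    integrable_G (by simpa only [hNorm] using summable_G)
  rw [← this]
  exact tsum_congr fun k => int_G k


lemma odd_sq_sum : ∑' k : ℕ, (4:ℝ)/((2*(k:ℝ))+1)^2 = 3 * zval 2 := by
  set f : ℕ → ℝ := fun n => 1/((n:ℝ)+1)^2 with hf
  have hsum : Summable f := by
    have h0 := Real.summable_one_div_nat_pow.mpr (show 1 < 2 by norm_num)
    have h2 := (summable_nat_add_iff (f := fun n : ℕ => 1/((n:ℝ))^2) 1).mpr h0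
    simpa [hf, one_div] using h2
  have he : Summable (fun k : ℕ => f (2*k)) :=
    hsum.comp_injective (fun a b h => by omega)
  have ho : Summable (fun k : ℕ => f (2*k+1)) :=
    hsum.comp_injective (fun a b h => by omega)
  have hsplit := tsum_even_add_odd he ho
  have hodd : ∑' k : ℕ, f (2*k+1) = (1/4) * zval 2 := by
    rw [zval, ← tsum_mul_left]
    apply tsum_congr
    intro k
    simp only [hf]
    push_cast
    rw [div_eq_mul_inv, div_eq_mul_inv]
    rw [show (2*(k:ℝ)+1+1) = 2*((k:ℝ)+1) by ring]
    rw [mul_pow]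
    rw [mul_inv]
    norm_num
  have htot : ∑' n : ℕ, f n = zval 2 := rfl
  rw [htot, hodd] at hsplit
  have heven : ∑' k : ℕ, f (2*k) = (3/4) * zval 2 := by linarith
  have : (fun k : ℕ => (4:ℝ)/((2*(k:ℝ))+1)^2) = fun k : ℕ => 4 * f (2*k) := by
    funext k
    simp only [hf]
    push_cast
    rw [div_eq_mul_inv, one_div]
  rw [this, tsum_mul_left, heven]
  ring

end Aux

theorem stmt_13 :
    ∑' n : ℕ, (4 ^ (n + 1) : ℝ) / (((n : ℝ) + 1) ^ 2 * (Nat.choose (2 * (n + 1)) (n + 1) : ℝ)) =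
    3 * zval 2 := by
  have h1 : ∀ n : ℕ, (4 ^ (n + 1) : ℝ) / (((n : ℝ) + 1) ^ 2 * (Nat.choose (2 * (n + 1)) (n + 1) : ℝ))
      = 2/((n:ℝ)+1) * J n := term_eq
  rw [tsum_congr h1, tonelli1]
  rw [MeasureTheory.setIntegral_congr_fun measurableSet_Ioo (fun t ht => pointwise_eq ht)]
  rw [tonelli2, odd_sq_sum]
end

section
/- The series ∑_{n=1}^∞ (1/4^n) * C(2n,n) * (H_{2n−1} − H_n) / n equals ln(2)^2. -/
open Real Finset

noncomputable def aa (n : ℕ) : ℝ := (Nat.centralBinom n : ℝ) / 4 ^ n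

noncomputable def bb (n : ℕ) : ℝ := aa n / n

lemma aa_zero : aa 0 = 1 := by simp [aa, Nat.centralBinom]

lemma aa_pos (n : ℕ) : 0 < aa n :=
  div_pos (by exact_mod_cast Nat.centralBinom_pos n) (by positivity)

lemma aa_succ (n : ℕ) : aa (n + 1) = aa n * (2 * n + 1) / (2 * n + 2) := by
  have h := Nat.succ_mul_centralBinom_succ n
  have h' : ((n : ℝ) + 1) * (Nat.centralBinom (n + 1) : ℝ)
      = 2 * (2 * n + 1) * (Nat.centralBinom n : ℝ) := by exact_mod_cast h
  have h4 : (4 : ℝ) ^ (n + 1) = 4 ^ n * 4 := by ring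
  unfold aa
  rw [h4]
  have hn1 : ((n : ℝ) + 1) ≠ 0 := by positivity
  have h4n : (4 : ℝ) ^ n ≠ 0 := by positivity
  field_simp
  linear_combination 2 * h'

lemma aa_succ' (n : ℕ) : 2 * ((n:ℝ) + 1) * aa (n + 1) = (2 * n + 1) * aa n := by
  rw [aa_succ]
  have : (2 * (n:ℝ) + 2) ≠ 0 := by positivity
  field_simp

noncomputable def Vs (n : ℕ) : ℝ := ∑ k ∈ Finset.range (n + 1), aa k * aa (n - k)

noncomputable def Ws (n : ℕ) : ℝ := ∑ k ∈ Finset.range (n + 1), (k : ℝ) * aa k * aa (n - k)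

lemma Ws_refl (n : ℕ) : Ws n = ∑ k ∈ Finset.range (n + 1), ((n : ℝ) - k) * aa k * aa (n - k) := by
  unfold Ws
  rw [← Finset.sum_range_reflect]
  refine Finset.sum_congr rfl fun k hk => ?_
  have hk' : k ≤ n := Nat.lt_succ_iff.mp (Finset.mem_range.mp hk)
  rw [Nat.add_sub_cancel, Nat.sub_sub_self hk', Nat.cast_sub hk']
  ring

lemma two_Ws (n : ℕ) : 2 * Ws n = n * Vs n := by
  have := Ws_refl n
  unfold Ws Vs at *
  rw [Finset.mul_sum, Finset.mul_sum]
  have h2 : ∀ k ∈ Finset.range (n+1), 2 * ((k:ℝ) * aa k * aa (n - k)) =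
      (k:ℝ) * aa k * aa (n-k) + (k:ℝ) * aa k * aa (n-k) := fun k _ => by ring
  rw [Finset.sum_congr rfl h2, Finset.sum_add_distrib]
  nth_rewrite 2 [this]
  rw [← Finset.sum_add_distrib]
  refine Finset.sum_congr rfl fun k hk => ?_
  ring

lemma Ws_succ (n : ℕ) : 2 * Ws (n + 1) = 2 * Ws n + Vs n := by
  have h1 : Ws (n + 1) = ∑ k ∈ Finset.range (n + 1),
      ((k : ℝ) + 1) * aa (k + 1) * aa (n - k) := by
    unfold Ws
    rw [Finset.sum_range_succ']
    simp
  rw [h1, Finset.mul_sum]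
  unfold Ws Vs
  rw [Finset.mul_sum, ← Finset.sum_add_distrib]
  refine Finset.sum_congr rfl fun k hk => ?_
  have h := aa_succ' k
  nlinarith [h, aa_pos (n - k)]

lemma Vs_eq_one (n : ℕ) : Vs n = 1 := by
  induction n with
  | zero => simp [Vs, aa_zero]
  | succ n ih =>
    have h1 := two_Ws (n + 1)
    have h2 := Ws_succ n
    have h3 := two_Ws n
    have hn : ((n : ℝ) + 1) ≠ 0 := by positivity
    have : ((n:ℝ) + 1) * Vs (n + 1) = ((n:ℝ) + 1) * Vs n := by
      push_cast at h1
      nlinarith [h1, h2, h3, ih]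
    rw [ih] at this
    field_simp at this
    linarith [this]

noncomputable def Ds (n : ℕ) : ℝ := ∑ k ∈ Finset.range (n + 1), aa k * aa (n - k) / k

noncomputable def Es (n : ℕ) : ℝ :=
  ∑ k ∈ Finset.range (n + 1), ((n : ℝ) - k) * (aa k * aa (n - k) / k)

lemma k_mul_term (n : ℕ) :
    ∑ k ∈ Finset.range (n + 1), (k : ℝ) * (aa k * aa (n - k) / k) = 1 - aa n := by
  have h1 : ∑ k ∈ Finset.range (n + 1), (k : ℝ) * (aa k * aa (n - k) / k)
      = ∑ k ∈ Finset.range n, aa (k+1) * aa (n - (k+1)) := by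
    rw [Finset.sum_range_succ']
    simp only [Nat.cast_zero, zero_mul, add_zero, Nat.cast_add, Nat.cast_one]
    refine Finset.sum_congr rfl fun k hk => ?_
    have : ((k:ℝ) + 1) ≠ 0 := by positivity
    field_simp
  have h2 : Vs n = ∑ k ∈ Finset.range n, aa (k+1) * aa (n - (k+1)) + aa 0 * aa n := by
    unfold Vs
    rw [Finset.sum_range_succ']
    simp
  rw [h1]
  have := Vs_eq_one n
  rw [h2, aa_zero] at this
  linarith

lemma Es_eq (n : ℕ) : Es n = n * Ds n - (1 - aa n) := by
  unfold Es Ds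
  rw [Finset.mul_sum, ← k_mul_term n, ← Finset.sum_sub_distrib]
  refine Finset.sum_congr rfl fun k hk => ?_
  ring

lemma Es_succ (n : ℕ) : 2 * Es (n + 1) = 2 * Es n + Ds n := by
  have h1 : Es (n + 1) = ∑ k ∈ Finset.range (n + 1),
      (((n:ℝ) + 1) - k) * (aa k * aa (n + 1 - k) / k) := by
    unfold Es
    rw [Finset.sum_range_succ]
    push_cast
    simp
  rw [h1]
  unfold Es Ds
  rw [Finset.mul_sum, Finset.mul_sum, ← Finset.sum_add_distrib]
  refine Finset.sum_congr rfl fun k hk => ?_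
  have hk' : k ≤ n := Nat.lt_succ_iff.mp (Finset.mem_range.mp hk)
  have hsub : n + 1 - k = (n - k) + 1 := by omega
  have hcast : ((n:ℝ) - k) = ((n - k : ℕ) : ℝ) := by
    rw [Nat.cast_sub hk']
  rw [hsub]
  have h := aa_succ' (n - k)
  have h2 : 2 * (((n:ℝ)+1) - k) * aa ((n - k) + 1) = (2 * ((n:ℝ) - k) + 1) * aa (n - k) := by
    have e : ((n:ℝ) + 1 - k) = ((n-k:ℕ):ℝ) + 1 := by rw [Nat.cast_sub hk']; ring
    rw [e, hcast]
    linarith [h]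
  have expand : 2 * ((((n:ℝ) + 1) - k) * (aa k * aa ((n-k)+1) / k))
      = (2 * (((n:ℝ)+1) - k) * aa ((n-k)+1)) * (aa k / k) := by ring
  rw [expand, h2]
  ring

lemma recD (n : ℕ) : 2 * ((n:ℝ) + 1) * Ds (n + 1) = (2 * n + 1) * Ds n + 2 * (aa n - aa (n + 1)) := by
  have h1 := Es_succ n
  have h2 := Es_eq (n + 1)
  have h3 := Es_eq n
  push_cast at h2
  nlinarith [h1, h2, h3]

lemma H_succ (n : ℕ) : H (n + 1) = H n + 1 / ((n:ℝ) + 1) := Finset.sum_range_succ _ n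

lemma Ds_val (n : ℕ) : Ds n = 2 * aa n * (H (2 * n) - H n) := by
  induction n with
  | zero => simp [Ds, H]
  | succ n ih =>
    have hr := recD n
    rw [ih] at hr
    have h2n : 2 * (n + 1) = (2 * n + 1) + 1 := by ring
    rw [h2n, H_succ, H_succ, H_succ]
    have hsucc := aa_succ n
    have hpos : (0:ℝ) < 2 * (n:ℝ) + 2 := by positivity
    have hn1 : ((n:ℝ) + 1) ≠ 0 := by positivity
    have h2n1 : (2*(n:ℝ) + 1) ≠ 0 := by positivity
    have h2n2 : (2*(n:ℝ) + 2) ≠ 0 := by positivity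
    have hDs : Ds (n+1) = ((2 * (n:ℝ) + 1) * (2 * aa n * (H (2*n) - H n)) + 2 * (aa n - aa (n+1))) / (2 * ((n:ℝ)+1)) := by
      field_simp at hr ⊢
      linarith [hr]
    rw [hDs, hsucc]
    push_cast
    field_simp
    ring

lemma conv_bb (n : ℕ) : ∑ k ∈ Finset.range (n + 2), bb k * bb (n + 1 - k)
    = 4 * (aa (n + 1) * (H (2 * n + 1) - H (n + 1)) / ((n:ℝ) + 1)) := by
  have key : ∑ k ∈ Finset.range (n + 2), ((n:ℝ) + 1) * (bb k * bb (n + 1 - k))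
      = 2 * Ds (n + 1) - 2 * (aa (n + 1) / ((n:ℝ) + 1)) := by
    have refl2 : ∑ k ∈ Finset.range (n + 2), aa (n + 1 - k) * aa (n + 1 - (n + 1 - k)) / ((n + 1 - k : ℕ):ℝ)
        = Ds (n + 1) := by
      unfold Ds
      rw [← Finset.sum_range_reflect (fun j => aa j * aa (n + 1 - j) / (j:ℝ)) (n + 2)]
      refine Finset.sum_congr rfl fun k hk => ?_
      have h1 : n + 2 - 1 - k = n + 1 - k := by omega
      rw [h1]
    have termwise : ∀ k ∈ Finset.range (n + 2),
        ((n:ℝ) + 1) * (bb k * bb (n + 1 - k))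
        = (aa k * aa (n + 1 - k) / (k:ℝ))
          + (aa (n + 1 - k) * aa (n + 1 - (n + 1 - k)) / ((n + 1 - k : ℕ):ℝ))
          - (if k = 0 then aa (n + 1) / ((n:ℝ) + 1) else 0)
          - (if k = n + 1 then aa (n + 1) / ((n:ℝ) + 1) else 0) := by
      intro k hk
      have hk' : k ≤ n + 1 := Nat.lt_succ_iff.mp (Finset.mem_range.mp hk)
      rcases Nat.eq_zero_or_pos k with h0 | hpos
      · subst h0
        simp [bb, aa_zero]
      rcases eq_or_lt_of_le hk' with htop | hlt
      · subst htop
        simp [bb, aa_zero, Nat.sub_self]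
      · -- 1 ≤ k ≤ n
        have hm : n + 1 - (n + 1 - k) = k := by omega
        have hifs1 : (if k = 0 then aa (n + 1) / ((n:ℝ) + 1) else 0) = 0 := by
          simp [Nat.pos_iff_ne_zero.mp hpos]
        have hifs2 : (if k = n + 1 then aa (n + 1) / ((n:ℝ) + 1) else 0) = 0 := by
          simp [Nat.ne_of_lt hlt]
        rw [hm, hifs1, hifs2]
        set m := n + 1 - k with hmdef
        have hmpos : 0 < m := by omega
        have hkm : (k:ℝ) + (m:ℝ) = (n:ℝ) + 1 := by
          have : k + m = n + 1 := by omega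
          exact_mod_cast congrArg (Nat.cast : ℕ → ℝ) this
        have hk0 : (k:ℝ) ≠ 0 := by positivity
        have hm0 : (m:ℝ) ≠ 0 := by
          have : (0:ℝ) < m := by exact_mod_cast hmpos
          linarith
        unfold bb
        field_simp
        linear_combination (-(aa k * aa m)) * hkm
    rw [Finset.sum_congr rfl termwise]
    rw [Finset.sum_sub_distrib, Finset.sum_sub_distrib, Finset.sum_add_distrib]
    rw [refl2]
    have hD : ∑ k ∈ Finset.range (n + 2), aa k * aa (n + 1 - k) / (k:ℝ) = Ds (n + 1) := rfl
    rw [hD]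
    rw [Finset.sum_ite_eq' (Finset.range (n + 2)) 0, Finset.sum_ite_eq' (Finset.range (n + 2)) (n+1)]
    simp only [Finset.mem_range]
    have : (0 < n + 2) ∧ (n + 1 < n + 2) := ⟨by omega, by omega⟩
    rw [if_pos this.1, if_pos this.2]
    ring
  have hL : ∑ k ∈ Finset.range (n + 2), ((n:ℝ) + 1) * (bb k * bb (n + 1 - k))
      = ((n:ℝ) + 1) * ∑ k ∈ Finset.range (n + 2), bb k * bb (n + 1 - k) := by
    rw [Finset.mul_sum]
  rw [hL] at key
  have hn1 : ((n:ℝ) + 1) ≠ 0 := by positivity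
  have hDv := Ds_val (n + 1)
  have hHH : H (2 * (n + 1)) = H (2 * n + 1) + 1 / (2 * (n:ℝ) + 2) := by
    have h2n : 2 * (n + 1) = (2 * n + 1) + 1 := by ring
    rw [h2n, H_succ]
    push_cast
    ring_nf
  rw [hDv, hHH] at key
  have goal2 : ((n:ℝ) + 1) * (4 * (aa (n + 1) * (H (2 * n + 1) - H (n + 1)) / ((n:ℝ) + 1)))
      = 2 * (2 * aa (n + 1) * (H (2 * n + 1) + 1 / (2 * (n:ℝ) + 2) - H (n + 1))) - 2 * (aa (n + 1) / ((n:ℝ) + 1)) := by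
    field_simp
    ring
  have := key.trans goal2.symm
  exact mul_left_cancel₀ hn1 this

lemma aa_le_one (n : ℕ) : aa n ≤ 1 := by
  induction n with
  | zero => rw [aa_zero]
  | succ n ih =>
    rw [aa_succ]
    have h1 : (0:ℝ) < 2 * n + 2 := by positivity
    rw [div_le_one h1]
    nlinarith [aa_pos n]

lemma aa_sq_le (n : ℕ) : aa n ^ 2 ≤ 1 / (2 * (n:ℝ) + 1) := by
  induction n with
  | zero => rw [aa_zero]; norm_num
  | succ n ih =>
    rw [aa_succ]
    have h1 : (0:ℝ) < 2 * (n:ℝ) + 1 := by positivity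
    have h2 : (0:ℝ) < 2 * (n:ℝ) + 2 := by positivity
    have h3 : (0:ℝ) < 2 * (n:ℝ) + 3 := by positivity
    have key : (aa n * (2 * n + 1) / (2 * n + 2)) ^ 2
        = aa n ^ 2 * ((2 * (n:ℝ) + 1)^2 / (2 * n + 2)^2) := by
      field_simp
    rw [key]
    push_cast
    have step1 : aa n ^ 2 * ((2 * (n:ℝ) + 1)^2 / (2 * n + 2)^2)
        ≤ (1 / (2 * (n:ℝ) + 1)) * ((2 * (n:ℝ) + 1)^2 / (2 * n + 2)^2) := by
      apply mul_le_mul_of_nonneg_right ih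
      positivity
    refine step1.trans ?_
    have hsimp : 1 / (2 * (n:ℝ) + 1) * ((2 * (n:ℝ) + 1) ^ 2 / (2 * (n:ℝ) + 2) ^ 2)
        = (2 * (n:ℝ) + 1) / (2 * (n:ℝ) + 2) ^ 2 := by
      field_simp
    rw [hsimp]
    rw [div_le_div_iff₀ (by positivity) (by positivity)]
    push_cast
    nlinarith
lemma bb_nonneg (n : ℕ) : 0 ≤ bb n := by
  unfold bb
  rcases n with _ | m
  · simp
  · exact div_nonneg (aa_pos _).le (by positivity)

lemma bb_summable : Summable bb := by
  have hsum : Summable (fun n : ℕ => 1 / (n:ℝ) ^ (3/2 : ℝ)) :=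
    Real.summable_one_div_nat_rpow.mpr (by norm_num)
  refine Summable.of_nonneg_of_le bb_nonneg (fun n => ?_) hsum
  rcases n with _ | m
  · simp [bb]
  · set n := m + 1
    have hn : (0:ℝ) < n := by positivity
    have h1 : aa n ≤ 1 / Real.sqrt n := by
      have hsqle : aa n ^ 2 ≤ 1 / (n:ℝ) := by
        calc aa n ^ 2 ≤ 1 / (2 * (n:ℝ) + 1) := aa_sq_le n
          _ ≤ 1 / n := by
            apply one_div_le_one_div_of_le hn
            linarith
      calc aa n = Real.sqrt (aa n ^ 2) := (Real.sqrt_sq (aa_pos n).le).symm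
        _ ≤ Real.sqrt (1 / n) := Real.sqrt_le_sqrt hsqle
        _ = 1 / Real.sqrt n := by rw [one_div, Real.sqrt_inv, one_div]
    have h2 : bb n = aa n / n := rfl
    have h3 : (n:ℝ) ^ (3/2 : ℝ) = n * Real.sqrt n := by
      rw [show (3/2 : ℝ) = 1 + 1/2 by norm_num, Real.rpow_add hn, Real.rpow_one,
        Real.sqrt_eq_rpow]
    rw [h2, h3]
    rw [div_le_div_iff₀ hn (by positivity)]
    have hs0 : Real.sqrt (n:ℝ) ≠ 0 := ne_of_gt (Real.sqrt_pos.mpr hn)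
    have h4 : aa n * ((n:ℝ) * Real.sqrt n) ≤ (1 / Real.sqrt n) * ((n:ℝ) * Real.sqrt n) :=
      mul_le_mul_of_nonneg_right h1 (by positivity)
    have h5 : (1 / Real.sqrt n) * ((n:ℝ) * Real.sqrt n) = n := by
      field_simp
    rw [h5] at h4
    linarith [h4]

noncomputable def Pf (x : ℝ) : ℝ := ∑' n, aa n * x ^ n
noncomputable def Gf (x : ℝ) : ℝ := ∑' n, bb n * x ^ n

lemma sumP {x : ℝ} (hx : |x| < 1) : Summable (fun n => aa n * x ^ n) := by
  refine Summable.of_norm_bounded (g := fun n => |x| ^ n) (summable_geometric_of_lt_one (abs_nonneg x) hx) (fun n => ?_)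
  rw [norm_mul, norm_pow]
  have h1 : ‖aa n‖ ≤ 1 := by rw [Real.norm_eq_abs, abs_of_pos (aa_pos n)]; exact aa_le_one n
  have h2 : ‖x‖ ^ n = |x| ^ n := rfl
  nlinarith [pow_nonneg (abs_nonneg x) n, norm_nonneg (aa n), pow_le_one₀ (abs_nonneg x) hx.le (n := n)]

lemma sumP' {x : ℝ} (hx : |x| < 1) : Summable (fun n => aa n * ((n:ℝ) * x ^ (n - 1))) := by
  rw [← _root_.summable_nat_add_iff 1]
  have base : Summable (fun n : ℕ => ((n:ℝ) + 1) * |x| ^ n) := by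
    have h := summable_pow_mul_geometric_of_norm_lt_one (R := ℝ) 1 (r := |x|) (by simpa using hx)
    have h0 : Summable (fun n : ℕ => |x| ^ n) := summable_geometric_of_lt_one (abs_nonneg x) hx
    refine Summable.congr (h.add h0) (fun n => ?_)
    push_cast
    ring
  refine Summable.of_norm_bounded base (fun n => ?_)
  simp only [Nat.add_sub_cancel]
  rw [norm_mul, norm_mul, norm_pow]
  have h1 : ‖aa (n+1)‖ ≤ 1 := by
    rw [Real.norm_eq_abs, abs_of_pos (aa_pos _)]; exact aa_le_one _
  have h2 : ‖((n+1:ℕ):ℝ)‖ = (n:ℝ) + 1 := by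
    rw [Real.norm_eq_abs, Nat.abs_cast]
    push_cast
    ring
  have h3 : ‖x‖ = |x| := rfl
  rw [h3, h2]
  nlinarith [pow_nonneg (abs_nonneg x) n, norm_nonneg (aa (n+1)), mul_nonneg (by positivity : (0:ℝ) ≤ (n:ℝ)+1) (pow_nonneg (abs_nonneg x) n)]

lemma sumG {x : ℝ} (hx : |x| < 1) : Summable (fun n => bb n * x ^ n) := by
  refine Summable.of_norm_bounded (g := fun n => |x| ^ n) (summable_geometric_of_lt_one (abs_nonneg x) hx) (fun n => ?_)
  rw [norm_mul, norm_pow]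
  have hb1 : bb n ≤ 1 := by
    rcases n with _ | m
    · simp [bb]
    · unfold bb
      rw [div_le_one (by positivity : (0:ℝ) < ((m+1:ℕ):ℝ))]
      have hm : (1:ℝ) ≤ ((m+1:ℕ):ℝ) := by exact_mod_cast Nat.one_le_iff_ne_zero.mpr (Nat.succ_ne_zero m)
      linarith [aa_le_one (m+1)]
  have h2 : ‖x‖ ^ n = |x| ^ n := rfl
  have hb0 : 0 ≤ bb n := bb_nonneg n
  rw [Real.norm_eq_abs (bb n), abs_of_nonneg hb0, h2]
  nlinarith [pow_nonneg (abs_nonneg x) n]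

lemma sumG' {x : ℝ} (hx : |x| < 1) : Summable (fun n => bb n * ((n:ℝ) * x ^ (n - 1))) := by
  have h := sumP' hx
  refine Summable.of_norm_bounded (h.norm) (fun n => ?_)
  rcases n with _ | m
  · simp [bb]
  · have hbn : bb (m+1) * (((m+1:ℕ):ℝ) * x ^ (m+1-1)) = aa (m+1) * x ^ (m+1-1) := by
      unfold bb
      have : ((m+1:ℕ):ℝ) ≠ 0 := by positivity
      field_simp
    rw [hbn]
    have : aa (m+1) * x ^ (m+1-1) = aa (m+1) * (((m+1:ℕ):ℝ) * x ^ (m+1-1)) / ((m+1:ℕ):ℝ) := by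
      have h0 : ((m+1:ℕ):ℝ) ≠ 0 := by positivity
      field_simp
    rw [this, norm_div]
    have h1 : (1:ℝ) ≤ ‖((m+1:ℕ):ℝ)‖ := by
      rw [Real.norm_eq_abs, Nat.abs_cast]
      exact_mod_cast Nat.one_le_iff_ne_zero.mpr (Nat.succ_ne_zero m)
    calc ‖aa (m+1) * (((m+1:ℕ):ℝ) * x ^ (m+1-1))‖ / ‖((m+1:ℕ):ℝ)‖
        ≤ ‖aa (m+1) * (((m+1:ℕ):ℝ) * x ^ (m+1-1))‖ / 1 := by
          apply div_le_div_of_nonneg_left (norm_nonneg _) one_pos h1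
      _ = ‖aa (m+1) * (((m+1:ℕ):ℝ) * x ^ (m+1-1))‖ := by rw [div_one]

lemma hasDerivAt_Pf {y : ℝ} (hy : |y| < 1) :
    HasDerivAt Pf (∑' n, aa n * ((n:ℝ) * y ^ (n - 1))) y := by
  set r : ℝ := (|y| + 1) / 2 with hrdef
  have hr0 : 0 < r := by positivity
  have hr1 : r < 1 := by rw [hrdef]; linarith
  have hyr : |y| < r := by rw [hrdef]; linarith
  have hu : Summable (fun n : ℕ => (n:ℝ) * r ^ n / r) := by
    have h := summable_pow_mul_geometric_of_norm_lt_one (R := ℝ) 1 (r := r)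
      (by rw [Real.norm_eq_abs, abs_of_pos hr0]; exact hr1)
    refine ((h.mul_right (1/r)).congr (fun n => ?_))
    rw [pow_one]
    field_simp
  refine hasDerivAt_tsum_of_isPreconnected hu (isOpen_Ioo (a := -r) (b := r))
    (convex_Ioo _ _).isPreconnected
    (g := fun n x => aa n * x ^ n) (g' := fun n x => aa n * ((n:ℝ) * x ^ (n - 1)))
    (fun n x _ => (hasDerivAt_pow n x).const_mul (aa n)) (fun n x hx => ?_)
    (y₀ := 0) (by constructor <;> [linarith; linarith])
    ?_ (by constructor <;> [nlinarith [abs_lt.mp hyr]; nlinarith [abs_lt.mp hyr]])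
  · -- bound
    rcases n with _ | m
    · simp [hr0.le]
    · have hxr : |x| ≤ r := by
        rcases hx with ⟨hx1, hx2⟩
        rw [abs_le]; exact ⟨by linarith, by linarith⟩
      simp only [Nat.add_sub_cancel]
      rw [Real.norm_eq_abs, abs_mul, abs_mul, abs_pow, abs_of_pos (aa_pos _), Nat.abs_cast]
      have h1 : |x| ^ m ≤ r ^ m := pow_le_pow_left₀ (abs_nonneg x) hxr m
      have h2 : aa (m+1) ≤ 1 := aa_le_one _
      have h3 : ((m+1:ℕ):ℝ) * r ^ (m+1) / r = ((m+1:ℕ):ℝ) * r ^ m := by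
        rw [pow_succ]
        field_simp
      rw [h3]
      have hpos : (0:ℝ) ≤ ((m+1:ℕ):ℝ) := by positivity
      calc aa (m+1) * (((m+1:ℕ):ℝ) * |x| ^ m) ≤ 1 * (((m+1:ℕ):ℝ) * |x| ^ m) :=
            mul_le_mul_of_nonneg_right h2 (by positivity)
        _ = ((m+1:ℕ):ℝ) * |x| ^ m := one_mul _
        _ ≤ ((m+1:ℕ):ℝ) * r ^ m := mul_le_mul_of_nonneg_left h1 hpos
  · -- summable at 0
    apply summable_of_ne_finset_zero (s := {0})
    intro n hn
    simp only [Finset.mem_singleton] at hn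
    simp [zero_pow hn]

lemma hasDerivAt_Gf {y : ℝ} (hy : |y| < 1) :
    HasDerivAt Gf (∑' n, bb n * ((n:ℝ) * y ^ (n - 1))) y := by
  set r : ℝ := (|y| + 1) / 2 with hrdef
  have hr0 : 0 < r := by positivity
  have hr1 : r < 1 := by rw [hrdef]; linarith
  have hyr : |y| < r := by rw [hrdef]; linarith
  have hu : Summable (fun n : ℕ => r ^ n / r) := by
    refine ((summable_geometric_of_lt_one hr0.le hr1).mul_right (1/r)).congr (fun n => ?_)
    field_simp
  refine hasDerivAt_tsum_of_isPreconnected hu (isOpen_Ioo (a := -r) (b := r))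
    (convex_Ioo _ _).isPreconnected
    (g := fun n x => bb n * x ^ n) (g' := fun n x => bb n * ((n:ℝ) * x ^ (n - 1)))
    (fun n x _ => (hasDerivAt_pow n x).const_mul (bb n)) (fun n x hx => ?_)
    (y₀ := 0) (by constructor <;> [linarith; linarith])
    ?_ (by constructor <;> [nlinarith [abs_lt.mp hyr]; nlinarith [abs_lt.mp hyr]])
  · rcases n with _ | m
    · simp [bb, hr0.le]
    · have hxr : |x| ≤ r := by
        rcases hx with ⟨hx1, hx2⟩
        rw [abs_le]; exact ⟨by linarith, by linarith⟩
      simp only [Nat.add_sub_cancel]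
      have hbn : bb (m+1) * (((m+1:ℕ):ℝ) * x ^ m) = aa (m+1) * x ^ m := by
        unfold bb
        have : ((m+1:ℕ):ℝ) ≠ 0 := by positivity
        field_simp
      rw [Real.norm_eq_abs, hbn, abs_mul, abs_pow, abs_of_pos (aa_pos _)]
      have h1 : |x| ^ m ≤ r ^ m := pow_le_pow_left₀ (abs_nonneg x) hxr m
      have h2 : aa (m+1) ≤ 1 := aa_le_one _
      have h3 : r ^ (m+1) / r = r ^ m := by
        rw [pow_succ]; field_simp
      rw [h3]
      calc aa (m+1) * |x| ^ m ≤ 1 * |x| ^ m := mul_le_mul_of_nonneg_right h2 (by positivity)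
        _ = |x| ^ m := one_mul _
        _ ≤ r ^ m := h1
  · apply summable_of_ne_finset_zero (s := {0})
    intro n hn
    simp only [Finset.mem_singleton] at hn
    simp [zero_pow hn]

lemma ode_P {x : ℝ} (hx : |x| < 1) :
    2 * (1 - x) * (∑' n, aa n * ((n:ℝ) * x ^ (n - 1))) = Pf x := by
  set S1 := ∑' n, aa n * ((n:ℝ) * x ^ (n - 1)) with hS1
  have hsum1 := sumP' hx
  have hshift : Summable (fun n : ℕ => ((n:ℝ) + 1) * aa (n+1) * x ^ n) := by
    have := (_root_.summable_nat_add_iff 1).mpr hsum1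
    refine this.congr (fun n => ?_)
    simp only [Nat.add_sub_cancel]
    push_cast
    ring
  have h1 : S1 = ∑' (n : ℕ), ((n:ℝ) + 1) * aa (n+1) * x ^ n := by
    rw [hS1, Summable.tsum_eq_zero_add hsum1]
    simp only [Nat.cast_zero, zero_mul, mul_zero, zero_add, Nat.add_sub_cancel]
    exact tsum_congr (fun n => by push_cast; ring)
  have hsum2 : Summable (fun n : ℕ => (n:ℝ) * aa n * x ^ n) := by
    refine (hsum1.mul_left x).congr (fun n => ?_)
    rcases n with _ | m
    · simp
    · simp only [Nat.add_sub_cancel]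
      push_cast
      ring
  have h2 : x * S1 = ∑' (n : ℕ), (n:ℝ) * aa n * x ^ n := by
    rw [hS1, ← tsum_mul_left]
    refine tsum_congr (fun n => ?_)
    rcases n with _ | m
    · simp
    · simp only [Nat.add_sub_cancel]
      push_cast
      ring
  have expand : 2 * (1 - x) * S1 = 2 * S1 - 2 * (x * S1) := by ring
  rw [expand, h2, h1, ← tsum_mul_left, ← tsum_mul_left, ← Summable.tsum_sub
    (hshift.mul_left 2) (hsum2.mul_left 2)]
  unfold Pf
  refine tsum_congr (fun n => ?_)
  have := aa_succ' n
  linear_combination (x ^ n) * this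

lemma Pf_zero : Pf 0 = 1 := by
  unfold Pf
  rw [tsum_eq_single 0 (fun n hn => by simp [zero_pow hn])]
  simp [aa_zero]

lemma Qf_deriv {y : ℝ} (hy : |y| < 1) :
    HasDerivAt (fun x => Pf x ^ 2 * (1 - x)) 0 y := by
  have hP := hasDerivAt_Pf hy
  set d := ∑' n, aa n * ((n:ℝ) * y ^ (n - 1)) with hd
  have h1 : HasDerivAt (fun x => Pf x ^ 2) (2 * Pf y ^ 1 * d) y := by
    simpa using hP.fun_pow 2
  have h2 : HasDerivAt (fun x : ℝ => 1 - x) (-1) y := by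
    simpa using ((hasDerivAt_id y).const_sub 1)
  have h3 := h1.mul h2
  have he : 2 * Pf y ^ 1 * d * (1 - y) + Pf y ^ 2 * (-1) = 0 := by
    have := ode_P hy
    rw [← hd] at this
    linear_combination (Pf y) * this
  rw [he] at h3
  exact h3

lemma Qf_eq_one {x : ℝ} (hx0 : 0 ≤ x) (hx1 : x < 1) : Pf x ^ 2 * (1 - x) = 1 := by
  rcases eq_or_lt_of_le hx0 with h | h
  · rw [← h, Pf_zero]; norm_num
  · have key : ∀ z ∈ Set.Icc (0:ℝ) x, Pf z ^ 2 * (1 - z) = Pf 0 ^ 2 * (1 - 0) := by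
      apply constant_of_has_deriv_right_zero
      · intro z hz
        have hz1 : |z| < 1 := by
          rw [abs_lt]
          rcases hz with ⟨hz0, hzx⟩
          constructor <;> nlinarith
        exact (Qf_deriv hz1).continuousAt.continuousWithinAt
      · intro z hz
        have hz1 : |z| < 1 := by
          rw [abs_lt]
          rcases hz with ⟨hz0, hzx⟩
          constructor <;> nlinarith
        exact (Qf_deriv hz1).hasDerivWithinAt
    have := key x (Set.mem_Icc.mpr ⟨hx0, le_refl x⟩)
    rw [this, Pf_zero]
    norm_num

lemma Pf_pos {x : ℝ} (hx0 : 0 ≤ x) (hx1 : x < 1) : 1 ≤ Pf x := by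
  have hsum := sumP (x := x) (by rw [abs_of_nonneg hx0]; exact hx1)
  have h := Summable.le_tsum hsum 0 (fun i _ => mul_nonneg (aa_pos i).le (pow_nonneg hx0 i))
  simpa [aa_zero, Pf] using h

lemma Pf_eq {x : ℝ} (hx0 : 0 ≤ x) (hx1 : x < 1) : Pf x = 1 / Real.sqrt (1 - x) := by
  have h1x : (0:ℝ) < 1 - x := by linarith
  have hu : 0 < Real.sqrt (1 - x) := Real.sqrt_pos.mpr h1x
  have hsq : (Pf x * Real.sqrt (1 - x)) ^ 2 = 1 := by
    rw [mul_pow, Real.sq_sqrt h1x.le]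
    exact Qf_eq_one hx0 hx1
  have hpos : 0 < Pf x * Real.sqrt (1 - x) := by
    have := Pf_pos hx0 hx1
    nlinarith
  have : Pf x * Real.sqrt (1 - x) = 1 := by
    nlinarith [hsq, hpos]
  rw [eq_div_iff (ne_of_gt hu)]
  exact this

lemma sumShift {y : ℝ} (hy : |y| < 1) : Summable (fun n : ℕ => aa (n+1) * y ^ n) := by
  refine Summable.of_norm_bounded (g := fun n => |y| ^ n)
    (summable_geometric_of_lt_one (abs_nonneg y) hy) (fun n => ?_)
  rw [norm_mul, norm_pow]
  have h1 : ‖aa (n+1)‖ ≤ 1 := by rw [Real.norm_eq_abs, abs_of_pos (aa_pos _)]; exact aa_le_one _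
  have h2 : ‖y‖ ^ n = |y| ^ n := rfl
  nlinarith [pow_nonneg (abs_nonneg y) n, norm_nonneg (aa (n+1))]

lemma S2_shift {y : ℝ} (hy : |y| < 1) :
    ∑' n, bb n * ((n:ℝ) * y ^ (n - 1)) = ∑' (n : ℕ), aa (n+1) * y ^ n := by
  rw [Summable.tsum_eq_zero_add (sumG' hy)]
  simp only [Nat.cast_zero, zero_mul, mul_zero, zero_add, Nat.add_sub_cancel]
  refine tsum_congr (fun n => ?_)
  unfold bb
  have h0 : ((n+1:ℕ):ℝ) ≠ 0 := by positivity
  push_cast at h0 ⊢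
  field_simp

lemma Pf_shift {y : ℝ} (hy : |y| < 1) : Pf y = 1 + y * ∑' (n : ℕ), aa (n+1) * y ^ n := by
  unfold Pf
  rw [Summable.tsum_eq_zero_add (sumP hy)]
  rw [← tsum_mul_left]
  simp only [pow_zero, mul_one, aa_zero]
  congr 1
  refine tsum_congr (fun n => ?_)
  rw [pow_succ]
  ring

lemma S2_val {y : ℝ} (hy0 : 0 ≤ y) (hy1 : y < 1) :
    ∑' n, bb n * ((n:ℝ) * y ^ (n - 1))
      = 1 / (Real.sqrt (1 - y) * (1 + Real.sqrt (1 - y))) := by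
  have hy : |y| < 1 := by rw [abs_of_nonneg hy0]; exact hy1
  rw [S2_shift hy]
  have h1y : (0:ℝ) < 1 - y := by linarith
  set u := Real.sqrt (1 - y) with hu
  have hu0 : 0 < u := Real.sqrt_pos.mpr h1y
  have hu2 : u ^ 2 = 1 - y := Real.sq_sqrt h1y.le
  rcases eq_or_lt_of_le hy0 with h | h
  · subst h
    rw [tsum_eq_single 0 (fun n hn => by simp [zero_pow hn])]
    have hu1 : u = 1 := by rw [hu]; simp
    rw [hu1]
    have : aa 1 = 1 / 2 := by rw [aa_succ 0, aa_zero]; norm_num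
    simp [this]
    norm_num
  · have hP := Pf_shift hy
    rw [Pf_eq hy0 hy1, ← hu] at hP
    have hSy : y * (∑' (n : ℕ), aa (n+1) * y ^ n) = 1 / u - 1 := by
      have := hP
      field_simp at this ⊢
      linarith [this]
    have hyu : y = (1 - u) * (1 + u) := by nlinarith [hu2]
    have h2 : y * (1 / (u * (1 + u))) = 1 / u - 1 := by
      rw [hyu]
      have hu1 : (1:ℝ) + u ≠ 0 := by positivity
      field_simp
    exact mul_left_cancel₀ (ne_of_gt h) (hSy.trans h2.symm)

lemma Gf_zero : Gf 0 = 0 := by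
  unfold Gf
  rw [tsum_eq_single 0 (fun n hn => by simp [zero_pow hn])]
  simp [bb]

lemma Rf_deriv {z : ℝ} (hz0 : 0 ≤ z) (hz1 : z < 1) :
    HasDerivAt (fun w => Gf w + 2 * Real.log (1 + Real.sqrt (1 - w))) 0 z := by
  have hz : |z| < 1 := by rw [abs_of_nonneg hz0]; exact hz1
  have h1z : (0:ℝ) < 1 - z := by linarith
  set u := Real.sqrt (1 - z) with hu
  have hu0 : 0 < u := Real.sqrt_pos.mpr h1z
  have hG := hasDerivAt_Gf hz
  have hs : HasDerivAt (fun w : ℝ => 1 - w) (-1) z := by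
    simpa using (hasDerivAt_id z).const_sub 1
  have hsq : HasDerivAt (fun w : ℝ => Real.sqrt (1 - w)) (1 / (2 * u) * (-1)) z := by
    have := (Real.hasDerivAt_sqrt (ne_of_gt h1z)).comp z hs
    simpa [hu, Function.comp_def] using this
  have hadd : HasDerivAt (fun w : ℝ => 1 + Real.sqrt (1 - w)) (1 / (2 * u) * (-1)) z := by
    simpa using hsq.const_add 1
  have h1u : (1:ℝ) + u ≠ 0 := by positivity
  have hlog : HasDerivAt (fun w : ℝ => Real.log (1 + Real.sqrt (1 - w)))
      ((1 / (2 * u) * (-1)) / (1 + u)) z := by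
    have := hadd.log h1u
    simpa [hu] using this
  have htot := hG.add (hlog.const_mul 2)
  have hval : (∑' n, bb n * ((n:ℝ) * z ^ (n - 1))) + 2 * ((1 / (2 * u) * (-1)) / (1 + u)) = 0 := by
    rw [S2_val hz0 hz1, ← hu]
    field_simp
    ring
  rw [hval] at htot
  exact htot

lemma Gf_eq {x : ℝ} (hx0 : 0 ≤ x) (hx1 : x < 1) :
    Gf x = 2 * Real.log 2 - 2 * Real.log (1 + Real.sqrt (1 - x)) := by
  have key : ∀ z ∈ Set.Icc (0:ℝ) x, Gf z + 2 * Real.log (1 + Real.sqrt (1 - z))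
      = Gf 0 + 2 * Real.log (1 + Real.sqrt (1 - 0)) := by
    apply constant_of_has_deriv_right_zero
    · intro z hz
      rcases hz with ⟨hz0, hzx⟩
      exact (Rf_deriv hz0 (by linarith)).continuousAt.continuousWithinAt
    · intro z hz
      rcases hz with ⟨hz0, hzx⟩
      exact (Rf_deriv hz0 (by linarith)).hasDerivWithinAt
  have h := key x (Set.mem_Icc.mpr ⟨hx0, le_refl x⟩)
  rw [Gf_zero] at h
  simp only [sub_zero, Real.sqrt_one] at h
  have h12 : (1:ℝ) + 1 = 2 := by norm_num
  rw [h12] at h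
  linarith [h]

lemma tsum_bb : ∑' n, bb n = 2 * Real.log 2 := by
  have hub : ∑' n, bb n ≤ 2 * Real.log 2 := by
    apply Real.tsum_le_of_sum_range_le bb_nonneg
    intro N
    have hcontp : Continuous fun x : ℝ => ∑ i ∈ Finset.range N, bb i * x ^ i := by
      continuity
    have hcont : Filter.Tendsto (fun x : ℝ => ∑ i ∈ Finset.range N, bb i * x ^ i)
        (nhdsWithin 1 (Set.Iio 1)) (nhds (∑ i ∈ Finset.range N, bb i)) := by
      have h : Filter.Tendsto (fun x : ℝ => ∑ i ∈ Finset.range N, bb i * x ^ i)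
          (nhdsWithin 1 (Set.Iio 1)) (nhds (∑ i ∈ Finset.range N, bb i * 1 ^ i)) :=
        (hcontp.continuousAt (x := 1)).tendsto.mono_left nhdsWithin_le_nhds
      simpa using h
    refine le_of_tendsto hcont ?_
    filter_upwards [Ioo_mem_nhdsLT_of_mem (Set.mem_Ioc.mpr ⟨zero_lt_one, le_refl (1:ℝ)⟩)] with x hx
    obtain ⟨hx0, hx1⟩ := hx
    have hxabs : |x| < 1 := by rw [abs_of_nonneg hx0.le]; exact hx1
    calc ∑ i ∈ Finset.range N, bb i * x ^ i ≤ Gf x :=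
          Summable.sum_le_tsum (Finset.range N)
            (fun i _ => mul_nonneg (bb_nonneg i) (pow_nonneg hx0.le i)) (sumG hxabs)
      _ = 2 * Real.log 2 - 2 * Real.log (1 + Real.sqrt (1 - x)) := Gf_eq hx0.le hx1
      _ ≤ 2 * Real.log 2 := by
          have h1 : (0:ℝ) ≤ Real.log (1 + Real.sqrt (1 - x)) :=
            Real.log_nonneg (by nlinarith [Real.sqrt_nonneg (1 - x)])
          linarith
  have hlb : 2 * Real.log 2 ≤ ∑' n, bb n := by
    have hc1 : Continuous fun x : ℝ => 1 + Real.sqrt (1 - x) := by continuity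
    have hc2 : ContinuousAt (fun x : ℝ => Real.log (1 + Real.sqrt (1 - x))) 1 := by
      apply ContinuousAt.comp (Real.continuousAt_log ?_) hc1.continuousAt
      simp
    have hc3 : ContinuousAt (fun x : ℝ => 2 * Real.log 2 - 2 * Real.log (1 + Real.sqrt (1 - x))) 1 :=
      continuousAt_const.sub (continuousAt_const.mul hc2)
    have hval : (2 : ℝ) * Real.log 2 - 2 * Real.log (1 + Real.sqrt (1 - 1)) = 2 * Real.log 2 := by
      simp
    have htend : Filter.Tendsto (fun x : ℝ => 2 * Real.log 2 - 2 * Real.log (1 + Real.sqrt (1 - x)))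
        (nhdsWithin 1 (Set.Iio 1)) (nhds (2 * Real.log 2)) := by
      have h : Filter.Tendsto (fun x : ℝ => 2 * Real.log 2 - 2 * Real.log (1 + Real.sqrt (1 - x)))
          (nhdsWithin 1 (Set.Iio 1)) (nhds (2 * Real.log 2 - 2 * Real.log (1 + Real.sqrt (1 - 1)))) :=
        hc3.tendsto.mono_left nhdsWithin_le_nhds
      rw [hval] at h
      exact h
    refine le_of_tendsto htend ?_
    filter_upwards [Ioo_mem_nhdsLT_of_mem (Set.mem_Ioc.mpr ⟨zero_lt_one, le_refl (1:ℝ)⟩)] with x hx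
    obtain ⟨hx0, hx1⟩ := hx
    have hxabs : |x| < 1 := by rw [abs_of_nonneg hx0.le]; exact hx1
    rw [← Gf_eq hx0.le hx1]
    exact Summable.tsum_le_tsum (fun n => by
        have hp1 : x ^ n ≤ 1 := pow_le_one₀ hx0.le hx1.le
        nlinarith [bb_nonneg n, pow_nonneg hx0.le n])
      (sumG hxabs) bb_summable
  linarith

theorem stmt_18' :
    ∑' n : ℕ, ((Nat.choose (2 * (n + 1)) (n + 1) : ℝ) / 4 ^ (n + 1)) * (H (2 * n + 1) - H (n + 1)) / ((n : ℝ) + 1) =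
    Real.log 2 ^ 2 := by
  have hnorm : Summable (fun n => ‖bb n‖) := by
    have he : (fun n => ‖bb n‖) = bb :=
      funext fun n => by rw [Real.norm_eq_abs, abs_of_nonneg (bb_nonneg n)]
    rw [he]
    exact bb_summable
  have hcp := tsum_mul_tsum_eq_tsum_sum_range_of_summable_norm hnorm hnorm
  have hsc : Summable (fun n => ∑ k ∈ Finset.range (n+1), bb k * bb (n-k)) :=
    (summable_norm_sum_mul_range_of_summable_norm hnorm hnorm).of_norm
  rw [tsum_bb, Summable.tsum_eq_zero_add hsc] at hcp
  have hzero : ∑ k ∈ Finset.range (0+1), bb k * bb (0-k) = 0 := by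
    simp [bb]
  rw [hzero, zero_add] at hcp
  have hterm : ∀ n : ℕ,
      ((Nat.choose (2 * (n + 1)) (n + 1) : ℝ) / 4 ^ (n + 1)) * (H (2 * n + 1) - H (n + 1)) / ((n : ℝ) + 1)
      = (∑ k ∈ Finset.range (n + 1 + 1), bb k * bb (n + 1 - k)) / 4 := by
    intro n
    have hc : ∑ k ∈ Finset.range (n + 1 + 1), bb k * bb (n + 1 - k)
        = 4 * (aa (n + 1) * (H (2 * n + 1) - H (n + 1)) / ((n:ℝ) + 1)) := conv_bb n
    rw [hc]
    have haa : aa (n+1) = (Nat.choose (2 * (n + 1)) (n + 1) : ℝ) / 4 ^ (n + 1) := rfl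
    rw [haa]
    ring
  rw [tsum_congr hterm]
  have hdiv : ∑' n : ℕ, (∑ k ∈ Finset.range (n + 1 + 1), bb k * bb (n + 1 - k)) / 4
      = (∑' n : ℕ, ∑ k ∈ Finset.range (n + 1 + 1), bb k * bb (n + 1 - k)) / 4 := by
    rw [tsum_div_const]
  rw [hdiv, ← hcp]
  ring

theorem stmt_18 :
    ∑' n : ℕ, ((Nat.choose (2 * (n + 1)) (n + 1) : ℝ) / 4 ^ (n + 1)) * (H (2 * n + 1) - H (n + 1)) / ((n : ℝ) + 1) =
    Real.log 2 ^ 2 := stmt_18'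
end
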